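/- arXiv:2305.19251 — 8 statements merged into one kernel-verified Lean document; each statement's English description precedes it below -/
import Mathlib

section
/- Let X be a finite set, S_1, …, S_m subsets of X, and 1 ≤ l ≤ m. Let (I_j)_{j=0}^{l} be a greedy index sequence. Then for every set J ⊆ {1, …, m} with |J| = l it holds that |⋃_{i ∈ I_l} S_i| ≥ (1 − 1/e) · |⋃_{i ∈ J} S_i|; that is, the greedy algorithm is a (1 − 1/e)-approximation for Maximum Coverage under exact cardinality constraints (MCP-ECC). -/
open Finset

/-- The greedy algorithm is a (1 - 1/e)-approximation for Maximum
Coverage under exact cardinality constraints (MCP-ECC). -/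
theorem greedy_mcp_ecc {α : Type*} [DecidableEq α] (X : Finset α) (m l : ℕ)
    (hl1 : 1 ≤ l) (hlm : l ≤ m)
    (S : Fin m → Finset α) (hSX : ∀ i, S i ⊆ X)
    (I : ℕ → Finset (Fin m)) (hI0 : I 0 = ∅)
    (hgreedy : ∀ j < l, ∃ i ∉ I j, I (j + 1) = insert i (I j) ∧
      ∀ i' ∉ I j, ((insert i' (I j)).biUnion S).card ≤ ((insert i (I j)).biUnion S).card) :
    ∀ J : Finset (Fin m), J.card = l →
      (1 - 1 / Real.exp 1) * ((J.biUnion S).card : ℝ) ≤ (((I l).biUnion S).card : ℝ) := by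
  intro J hJ
  set g : ℕ → ℝ := fun j => (((I j).biUnion S).card : ℝ) with hg
  set OPT : ℝ := ((J.biUnion S).card : ℝ) with hOPT
  have hOPT0 : 0 ≤ OPT := Nat.cast_nonneg _
  have hl0 : (0:ℝ) < (l : ℝ) := by exact_mod_cast hl1
  have hlinv : 1 / (l:ℝ) ≤ 1 := by
    rw [div_le_one hl0]; exact_mod_cast hl1
  have hJne : J.Nonempty := Finset.card_pos.mp (by omega)
  -- key recurrence
  have key : ∀ j < l, OPT - g (j+1) ≤ (1 - 1/(l:ℝ)) * (OPT - g j) := by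
    intro j hj
    obtain ⟨i0, hi0, hins, hbest⟩ := hgreedy j hj
    have hmono : g j ≤ g (j+1) := by
      have : (I j).biUnion S ⊆ (I (j+1)).biUnion S := by
        rw [hins]
        exact Finset.biUnion_subset_biUnion_of_subset_left S (Finset.subset_insert _ _)
      simp only [hg]
      exact_mod_cast Finset.card_le_card this
    -- coverage bound: OPT - g j ≤ ∑_{i∈J} |S i \ C|
    have hsum : OPT - g j ≤ ∑ i ∈ J, ((S i \ (I j).biUnion S).card : ℝ) := by
      have hsub : J.biUnion S ⊆
          (I j).biUnion S ∪ J.biUnion (fun i => S i \ (I j).biUnion S) := by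
        intro x hx
        simp only [Finset.mem_biUnion, Finset.mem_union, Finset.mem_sdiff] at *
        obtain ⟨i, hiJ, hx⟩ := hx
        by_cases h : ∃ i' ∈ I j, x ∈ S i'
        · exact Or.inl h
        · exact Or.inr ⟨i, hiJ, hx, by simpa using h⟩
      have h1 : (J.biUnion S).card ≤
          ((I j).biUnion S).card + (J.biUnion (fun i => S i \ (I j).biUnion S)).card := by
        calc (J.biUnion S).card
            ≤ ((I j).biUnion S ∪ J.biUnion (fun i => S i \ (I j).biUnion S)).card :=
              Finset.card_le_card hsub
          _ ≤ _ := Finset.card_union_le _ _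
      have h2 : (J.biUnion (fun i => S i \ (I j).biUnion S)).card ≤
          ∑ i ∈ J, (S i \ (I j).biUnion S).card := Finset.card_biUnion_le
      have := h1.trans (Nat.add_le_add_left h2 _)
      have := (Nat.cast_le (α := ℝ)).mpr this
      push_cast at this
      simp only [hOPT, hg]
      linarith
    -- some element of J has large marginal gain
    obtain ⟨i, hiJ, hle⟩ : ∃ i ∈ J, (OPT - g j)/(l:ℝ) ≤ ((S i \ (I j).biUnion S).card : ℝ) := by
      by_contra hcon
      push_neg at hcon
      have : ∑ i ∈ J, ((S i \ (I j).biUnion S).card : ℝ) < ∑ _i ∈ J, (OPT - g j)/(l:ℝ) :=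
        Finset.sum_lt_sum_of_nonempty hJne hcon
      rw [Finset.sum_const, hJ, nsmul_eq_mul] at this
      rw [mul_div_cancel₀ _ (ne_of_gt hl0)] at this
      linarith
    by_cases hiI : i ∈ I j
    · -- marginal gain of i is 0, so OPT - g j ≤ 0
      have : S i \ (I j).biUnion S = ∅ := by
        rw [Finset.sdiff_eq_empty_iff_subset]
        exact Finset.subset_biUnion_of_mem S hiI
      rw [this] at hle
      simp at hle
      have hneg : OPT - g j ≤ 0 := by
        by_contra h
        push_neg at h
        have := div_pos h hl0
        linarith
      have h0 : (1/(l:ℝ)) * (OPT - g j) ≤ 0 :=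
        mul_nonpos_of_nonneg_of_nonpos (by positivity) hneg
      nlinarith [hmono]
    · -- greedy does at least as well as inserting i
      have hgain : g j + ((S i \ (I j).biUnion S).card : ℝ) ≤ g (j+1) := by
        have hcard : ((insert i (I j)).biUnion S).card
            = (S i \ (I j).biUnion S).card + ((I j).biUnion S).card := by
          rw [Finset.biUnion_insert,
            ← Finset.card_sdiff_add_card_eq_card
              (Finset.subset_union_right (s₁ := S i) (s₂ := (I j).biUnion S)),
            Finset.union_sdiff_right]
        have hb := hbest i hiI
        rw [hcard] at hb
        simp only [hg]
        rw [hins]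
        have := (Nat.cast_le (α := ℝ)).mpr hb
        push_cast at this ⊢
        linarith
      have : g j + (OPT - g j)/(l:ℝ) ≤ g (j+1) := by linarith
      have hexp : (1 - 1/(l:ℝ)) * (OPT - g j) = OPT - (g j + (OPT - g j)/(l:ℝ)) := by
        field_simp
        ring
      rw [hexp]
      linarith
  -- iterate the recurrence
  have hfac0 : (0:ℝ) ≤ 1 - 1/(l:ℝ) := by linarith
  have main : ∀ j, j ≤ l → OPT - g j ≤ (1 - 1/(l:ℝ))^j * OPT := by
    intro j
    induction j with
    | zero =>
      intro _
      simp only [hg, hI0, pow_zero, one_mul]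
      simp
    | succ j ih =>
      intro hjl
      have hj : j < l := by omega
      calc OPT - g (j+1) ≤ (1 - 1/(l:ℝ)) * (OPT - g j) := key j hj
        _ ≤ (1 - 1/(l:ℝ)) * ((1 - 1/(l:ℝ))^j * OPT) :=
            mul_le_mul_of_nonneg_left (ih (le_of_lt hj)) hfac0
        _ = (1 - 1/(l:ℝ))^(j+1) * OPT := by ring
  have hfinal := main l le_rfl
  -- (1 - 1/l)^l ≤ 1 / e
  have hpow : (1 - 1/(l:ℝ))^l ≤ 1 / Real.exp 1 := by
    have h1 : (1 - 1/(l:ℝ)) ≤ Real.exp (-(1/(l:ℝ))) := by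
      have := Real.add_one_le_exp (-(1/(l:ℝ)))
      linarith
    have h2 : (1 - 1/(l:ℝ))^l ≤ (Real.exp (-(1/(l:ℝ))))^l :=
      pow_le_pow_left₀ hfac0 h1 l
    have h3 : (Real.exp (-(1/(l:ℝ))))^l = Real.exp ((l:ℝ) * (-(1/(l:ℝ)))) :=
      (Real.exp_nat_mul _ l).symm
    have h4 : (l:ℝ) * (-(1/(l:ℝ))) = -1 := by
      field_simp
    rw [h3, h4, Real.exp_neg] at h2
    simpa [one_div] using h2
  have : (1 - 1/(l:ℝ))^l * OPT ≤ (1 / Real.exp 1) * OPT :=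
    mul_le_mul_of_nonneg_right hpow hOPT0
  have : OPT - g l ≤ (1 / Real.exp 1) * OPT := le_trans hfinal this
  linarith
end

section
/- Let G be a finite simple undirected graph with n vertices, k ≥ 1 an integer, and (A_p)_{p=0}^{n-1} a greedy sequence for dom. Then the quantities θ_p = ext(A_p)/p are nonincreasing and the quantities σ_p = ext(A_p)/(n − p) are nondecreasing; explicitly, for every 1 ≤ p ≤ n − 2, p · ext(A_{p+1}) ≤ (p + 1) · ext(A_p) and (n − p − 1) · ext(A_p) ≤ (n − p) · ext(A_{p+1}). -/
open Finset
open scoped Classical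

/-- The closed `k`-neighborhood of `v`: all vertices at graph distance at most `k`
from `v` (in particular `v` itself). -/
noncomputable def kNbhd {V : Type*} [Fintype V] (G : SimpleGraph V) (k : ℕ) (v : V) :
    Finset V :=
  Finset.univ.filter (fun u => G.Reachable u v ∧ G.dist u v ≤ k)

/-- `domk G k A` is the number of vertices `k`-hop dominated by `A`. -/
noncomputable def domk {V : Type*} [Fintype V] (G : SimpleGraph V) (k : ℕ) (A : Finset V) :
    ℕ :=
  (A.biUnion (kNbhd G k)).card

/-- `extk G k A` is the number of vertices externally `k`-hop dominated by `A`. -/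
noncomputable def extk {V : Type*} [Fintype V] (G : SimpleGraph V) (k : ℕ) (A : Finset V) :
    ℤ :=
  (domk G k A : ℤ) - (A.card : ℤ)

/-- A greedy sequence for `domk G k` (with `N` greedy steps): `A 0 = ∅` and each
`A (i+1)` is obtained from `A i` by inserting a new vertex maximizing `domk`. -/
def IsGreedySeq {V : Type*} [Fintype V] (G : SimpleGraph V) (k : ℕ) (N : ℕ)
    (A : ℕ → Finset V) : Prop :=
  A 0 = ∅ ∧ ∀ i < N, ∃ v ∉ A i, A (i + 1) = insert v (A i) ∧
    ∀ u ∉ A i, domk G k (insert u (A i)) ≤ domk G k (insert v (A i))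

lemma mem_kNbhd_self {V : Type*} [Fintype V] (G : SimpleGraph V) (k : ℕ) (v : V) :
    v ∈ kNbhd G k v :=
  Finset.mem_filter.mpr ⟨Finset.mem_univ v,
    SimpleGraph.Reachable.refl v, by rw [SimpleGraph.dist_self]; exact Nat.zero_le k⟩

lemma subset_biUnion_kNbhd {V : Type*} [Fintype V] (G : SimpleGraph V) (k : ℕ)
    (A : Finset V) : A ⊆ A.biUnion (kNbhd G k) := fun a ha =>
  Finset.mem_biUnion.mpr ⟨a, ha, mem_kNbhd_self G k a⟩

lemma domk_insert {V : Type*} [Fintype V] (G : SimpleGraph V) (k : ℕ) (A : Finset V) (u : V) :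
    domk G k (insert u A) = domk G k A + ((kNbhd G k u) \ A.biUnion (kNbhd G k)).card := by
  unfold domk
  rw [Finset.biUnion_insert, ← Finset.card_sdiff_add_card, Nat.add_comm]

lemma card_le_domk {V : Type*} [Fintype V] (G : SimpleGraph V) (k : ℕ) (A : Finset V) :
    A.card ≤ domk G k A :=
  Finset.card_le_card (subset_biUnion_kNbhd G k A)

/-- along a greedy sequence, θ_p = ext(A_p)/p is nonincreasing and
σ_p = ext(A_p)/(n-p) is nondecreasing. -/
theorem greedy_theta_sigma_monotone {V : Type*} [Fintype V] (G : SimpleGraph V)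
    (k : ℕ) (hk : 1 ≤ k) (A : ℕ → Finset V)
    (hA : IsGreedySeq G k (Fintype.card V - 1) A) :
    ∀ p : ℕ, 1 ≤ p → p ≤ Fintype.card V - 2 →
      (p : ℤ) * extk G k (A (p + 1)) ≤ ((p : ℤ) + 1) * extk G k (A p) ∧
      ((Fintype.card V : ℤ) - p - 1) * extk G k (A p) ≤
        ((Fintype.card V : ℤ) - p) * extk G k (A (p + 1)) := by
  classical
  obtain ⟨hA0, hstep⟩ := hA
  set n := Fintype.card V with hn
  choose v hv hins hgr using hstep
  have hsub : ∀ i, i < n - 1 → A i ⊆ A (i + 1) := by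
    intro i hi
    rw [hins i hi]
    exact Finset.subset_insert _ _
  have hcard : ∀ p, p ≤ n - 1 → (A p).card = p := by
    intro p
    induction p with
    | zero => intro _; simp [hA0]
    | succ q ih =>
        intro hq
        have hq' : q < n - 1 := by omega
        rw [hins q hq', Finset.card_insert_of_notMem (hv q hq'), ih (by omega)]
  have hD : ∀ i (hi : i < n - 1), domk G k (A (i + 1)) =
      domk G k (A i) + ((kNbhd G k (v i hi)) \ (A i).biUnion (kNbhd G k)).card := by
    intro i hi
    rw [hins i hi, domk_insert]
  have hmono : ∀ i, i + 1 < n - 1 →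
      (domk G k (A (i + 2)) : ℤ) - (domk G k (A (i + 1)) : ℤ) ≤
        (domk G k (A (i + 1)) : ℤ) - (domk G k (A i) : ℤ) := by
    intro i hi
    have hi0 : i < n - 1 := by omega
    have h1 := hD (i + 1) hi
    have hDsub : (A i).biUnion (kNbhd G k) ⊆ (A (i + 1)).biUnion (kNbhd G k) :=
      Finset.biUnion_subset_biUnion_of_subset_left _ (hsub i hi0)
    have hm : ((kNbhd G k (v (i + 1) hi)) \ (A (i + 1)).biUnion (kNbhd G k)).card ≤
        ((kNbhd G k (v (i + 1) hi)) \ (A i).biUnion (kNbhd G k)).card :=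
      Finset.card_le_card (Finset.sdiff_subset_sdiff Finset.Subset.rfl hDsub)
    have hvnot : v (i + 1) hi ∉ A i := fun h => hv (i + 1) hi (hsub i hi0 h)
    have hgr' := hgr i hi0 (v (i + 1) hi) hvnot
    rw [domk_insert, ← hins i hi0] at hgr'
    have h2 : i + 1 + 1 = i + 2 := rfl
    rw [h2] at h1
    omega
  -- key: p * (Δ_p) ≤ ext(A p)  (in dom terms)
  have key : ∀ p, p ≤ n - 2 →
      (p : ℤ) * ((domk G k (A (p + 1)) : ℤ) - (domk G k (A p) : ℤ) - 1) ≤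
        (domk G k (A p) : ℤ) - (p : ℤ) := by
    intro p
    induction p with
    | zero => intro _; simp [hA0, domk]
    | succ q ih =>
        intro hq
        have h1 := ih (by omega)
        have h2 := hmono q (by omega)
        have hQ : (0 : ℤ) ≤ (q : ℤ) := Int.natCast_nonneg q
        push_cast
        have h3 : q + 1 + 1 = q + 2 := rfl
        rw [h3] at *
        nlinarith [h1, h2, hQ]
  intro p hp1 hp2
  have hn3 : 3 ≤ n := by omega
  have hc1 : (A p).card = p := hcard p (by omega)
  have hc2 : (A (p + 1)).card = p + 1 := hcard (p + 1) (by omega)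
  have he1 : extk G k (A p) = (domk G k (A p) : ℤ) - (p : ℤ) := by
    rw [extk, hc1]
  have he2 : extk G k (A (p + 1)) = (domk G k (A (p + 1)) : ℤ) - ((p : ℤ) + 1) := by
    rw [extk, hc2]; push_cast; ring
  have hkey := key p hp2
  have hEp : (0 : ℤ) ≤ (domk G k (A p) : ℤ) - (p : ℤ) := by
    have h := card_le_domk G k (A p)
    rw [hc1] at h
    omega
  constructor
  · rw [he1, he2]
    nlinarith [hkey]
  · rw [he1, he2]
    have hplt : p < n - 1 := by omega
    have hDp := hD p hplt
    rcases Nat.eq_zero_or_pos ((kNbhd G k (v p hplt)) \ (A p).biUnion (kNbhd G k)).card with h0 | h1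
    · -- gain 0: everything dominated
      have hall : (A p).biUnion (kNbhd G k) = Finset.univ := by
        apply Finset.eq_univ_iff_forall.mpr
        intro u
        by_cases hu : u ∈ A p
        · exact subset_biUnion_kNbhd G k (A p) hu
        · have hgr' := hgr p hplt u hu
          rw [domk_insert, domk_insert] at hgr'
          rw [h0] at hgr'
          have hz : ((kNbhd G k u) \ (A p).biUnion (kNbhd G k)).card = 0 := by omega
          have hz' : (kNbhd G k u) \ (A p).biUnion (kNbhd G k) = ∅ :=
            Finset.card_eq_zero.mp hz
          by_contra hnot
          have : u ∈ (kNbhd G k u) \ (A p).biUnion (kNbhd G k) :=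
            Finset.mem_sdiff.mpr ⟨mem_kNbhd_self G k u, hnot⟩
          rw [hz'] at this
          exact absurd this (Finset.notMem_empty u)
      have hdom : domk G k (A p) = n := by
        rw [domk, hall, Finset.card_univ]
      have hdom2 : domk G k (A (p + 1)) = n := by omega
      rw [hdom, hdom2]
      nlinarith
    · -- gain ≥ 1
      have hle : (domk G k (A p) : ℤ) + 1 ≤ (domk G k (A (p + 1)) : ℤ) := by
        omega
      have hnp : (p : ℤ) + 2 ≤ (n : ℤ) := by omega
      nlinarith [hEp, hle, hnp]
end

section
/- Let G be a finite simple undirected graph with n vertices, k ≥ 1 an integer, and (A_p)_{p=0}^{n} a greedy sequence for dom. Then the marginal gains of the greedy sequence are nonincreasing: for every 1 ≤ i ≤ n − 1, dom(A_{i+1}) − dom(A_i) ≤ dom(A_i) − dom(A_{i−1}). -/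
open Finset
open scoped Classical

/-- the marginal gains of the greedy sequence are nonincreasing. -/
theorem greedy_marginal_gains_nonincreasing {V : Type*} [Fintype V] (G : SimpleGraph V)
    (k : ℕ) (hk : 1 ≤ k) (A : ℕ → Finset V)
    (hA : IsGreedySeq G k (Fintype.card V) A) :
    ∀ i : ℕ, 1 ≤ i → i ≤ Fintype.card V - 1 →
      (domk G k (A (i + 1)) : ℤ) - (domk G k (A i) : ℤ) ≤
        (domk G k (A i) : ℤ) - (domk G k (A (i - 1)) : ℤ) := by
  obtain ⟨h0, hstep⟩ := hA
  intro i hi1 hi2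
  have hcard : 2 ≤ Fintype.card V := by omega
  obtain ⟨v, hv, hAi1, hvmax⟩ := hstep i (by omega)
  obtain ⟨w, hw, hAi, hwmax⟩ := hstep (i - 1) (by omega)
  have hidx : i - 1 + 1 = i := by omega
  rw [hidx] at hAi
  have hsub : A (i - 1) ⊆ A i := hAi ▸ Finset.subset_insert _ _
  have hvnot : v ∉ A (i - 1) := fun h => hv (hsub h)
  have key : ∀ S : Finset V,
      (domk G k (insert v S) : ℤ) =
        ((kNbhd G k v \ S.biUnion (kNbhd G k)).card : ℤ) + domk G k S := by
    intro S
    unfold domk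
    rw [Finset.biUnion_insert, ← Finset.card_sdiff_add_card]
    push_cast; ring
  have hcov : (A (i - 1)).biUnion (kNbhd G k) ⊆ (A i).biUnion (kNbhd G k) :=
    Finset.biUnion_subset_biUnion_of_subset_left _ hsub
  have hmono : (kNbhd G k v \ (A i).biUnion (kNbhd G k)).card ≤
      (kNbhd G k v \ (A (i - 1)).biUnion (kNbhd G k)).card :=
    Finset.card_le_card (Finset.sdiff_subset_sdiff (Finset.Subset.refl _) hcov)
  have hvw : domk G k (insert v (A (i - 1))) ≤ domk G k (A i) := by
    rw [hAi]; exact hwmax v hvnot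
  have h1 : (domk G k (A (i + 1)) : ℤ) - domk G k (A i) =
      ((kNbhd G k v \ (A i).biUnion (kNbhd G k)).card : ℤ) := by
    rw [hAi1, key]; ring
  have h2 : ((kNbhd G k v \ (A (i - 1)).biUnion (kNbhd G k)).card : ℤ) =
      (domk G k (insert v (A (i - 1))) : ℤ) - domk G k (A (i - 1)) := by
    rw [key]; ring
  have := hmono
  rw [h1]
  calc ((kNbhd G k v \ (A i).biUnion (kNbhd G k)).card : ℤ)
      ≤ ((kNbhd G k v \ (A (i - 1)).biUnion (kNbhd G k)).card : ℤ) := by exact_mod_cast hmono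
    _ = (domk G k (insert v (A (i - 1))) : ℤ) - domk G k (A (i - 1)) := h2
    _ ≤ (domk G k (A i) : ℤ) - domk G k (A (i - 1)) := by
        have := hvw; omega
end

section
/- Let k ≥ 1 and let T be a finite rooted tree with n ≥ k + 2 vertices such that every child subtree of the root has at most k + 1 vertices. Then there exists a vertex v of T such that the number of vertices of T at distance between 1 and k from v is at least k + 1 and at least (k/(k+1)) · (n − 1); that is, v externally k-hop dominates at least max{k + 1, (k/(k+1))(n − 1)} vertices of T. -/
open Finset
open scoped Classical

private lemma dist_getVert_aux {V : Type*} {G : SimpleGraph V} (hc : G.Connected) :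
    ∀ {a b : V} (p : G.Walk a b), p.length = G.dist a b → ∀ {i : ℕ}, i ≤ p.length →
      G.dist a (p.getVert i) = i ∧ G.dist (p.getVert i) b = p.length - i := by
  intro a b p
  induction p with
  | nil =>
    intro hp i hi
    simp only [SimpleGraph.Walk.length_nil, Nat.le_zero] at hi
    subst hi
    simp [SimpleGraph.Walk.getVert_zero]
  | @cons a a' b h q ih =>
    intro hp i hi
    have hlen : (SimpleGraph.Walk.cons h q).length = q.length + 1 := by simp
    have hda : G.dist a a' = 1 := SimpleGraph.dist_eq_one_iff_adj.mpr h
    have hq : q.length = G.dist a' b := by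
      have h1 : G.dist a' b ≤ q.length := SimpleGraph.dist_le q
      have h2 : G.dist a b ≤ G.dist a a' + G.dist a' b := hc.dist_triangle
      omega
    cases i with
    | zero =>
      simp only [SimpleGraph.Walk.getVert_zero]
      exact ⟨SimpleGraph.dist_self, by omega⟩
    | succ j =>
      have hj : j ≤ q.length := by omega
      obtain ⟨hd1, hd2⟩ := ih hq hj
      rw [SimpleGraph.Walk.getVert_cons_succ]
      constructor
      · have hle : G.dist a (q.getVert j) ≤ j + 1 := by
          have := hc.dist_triangle (u := a) (v := a') (w := q.getVert j)
          omega
        have hge : j + 1 ≤ G.dist a (q.getVert j) := by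
          have := hc.dist_triangle (u := a) (v := q.getVert j) (w := b)
          omega
        omega
      · omega

private lemma geo {V : Type*} {G : SimpleGraph V} (hc : G.Connected) {r u : V}
    (p : G.Walk r u) (hp : p.length = G.dist r u)
    {i : ℕ} (hi1 : 1 ≤ i) (hi2 : i ≤ G.dist r u) :
    G.dist r (p.getVert i) = i ∧ G.dist (p.getVert 1) (p.getVert i) = i - 1 ∧
      G.dist (p.getVert i) u = G.dist r u - i := by
  have hi2' : i ≤ p.length := by omega
  obtain ⟨h1, h3⟩ := dist_getVert_aux hc p hp hi2'
  refine ⟨h1, ?_, by omega⟩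
  have hnil : ¬ p.Nil := by rw [SimpleGraph.Walk.not_nil_iff_lt_length]; omega
  have ht1 : G.dist (p.getVert 1) u = p.length - 1 :=
    (dist_getVert_aux hc p hp (by omega)).2
  have htlen : p.tail.length + 1 = p.length := SimpleGraph.Walk.length_tail_add_one hnil
  have htgeo : p.tail.length = G.dist (p.getVert 1) u := by omega
  have := (dist_getVert_aux hc p.tail htgeo (i := i - 1) (by omega)).1
  rwa [SimpleGraph.Walk.getVert_tail, show i - 1 + 1 = i by omega] at this

private lemma child_unique {V : Type*} {G : SimpleGraph V} (hT : G.IsTree) {r c c' w : V}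
    (h : G.Adj r c) (h' : G.Adj r c')
    (hw : G.dist r w = G.dist c w + 1) (hw' : G.dist r w = G.dist c' w + 1) : c = c' := by
  have hc := hT.isConnected
  have key : ∀ (x : V), G.Adj r x → G.dist r w = G.dist x w + 1 →
      ∃ (q : G.Walk x w), q.IsPath ∧ r ∉ q.support := by
    intro x hx hdx
    obtain ⟨q, hq⟩ := hc.exists_walk_length_eq_dist x w
    refine ⟨q, q.isPath_of_length_eq_dist hq, ?_⟩
    intro hr
    have h1 : G.dist x r ≤ (q.takeUntil r hr).length := SimpleGraph.dist_le _
    have h2 : G.dist r w ≤ (q.dropUntil r hr).length := SimpleGraph.dist_le _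
    have h3 : (q.takeUntil r hr).length + (q.dropUntil r hr).length = q.length := by
      rw [← SimpleGraph.Walk.length_append, q.take_spec hr]
    omega
  obtain ⟨q, hqp, hqr⟩ := key c h hw
  obtain ⟨q', hqp', hqr'⟩ := key c' h' hw'
  have hp1 : (q.cons h).IsPath := hqp.cons hqr
  have hp2 : (q'.cons h').IsPath := hqp'.cons hqr'
  have heq : q.cons h = q'.cons h' := (hT.existsUnique_path r w).unique hp1 hp2
  have : (q.cons h).getVert 1 = (q'.cons h').getVert 1 := by rw [heq]
  simp only [SimpleGraph.Walk.getVert_cons_succ, SimpleGraph.Walk.getVert_zero] at this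
  exact this

/-- if a tree has `n ≥ k + 2` vertices and every child subtree of the
root has at most `k + 1` vertices, then some vertex externally `k`-hop dominates at
least `max {k + 1, (k/(k+1)) (n - 1)}` vertices.  (A vertex `u` belongs to the child
subtree of a child `c` of the root `r` iff `dist r u = dist c u + 1`.) -/
theorem exists_good_external_dominator {V : Type*} [Fintype V]
    (G : SimpleGraph V) (hT : G.IsTree) (r : V) (k : ℕ) (hk : 1 ≤ k)
    (hn : k + 2 ≤ Fintype.card V)
    (hchild : ∀ c : V, G.Adj r c →
      (Finset.univ.filter (fun u => G.dist r u = G.dist c u + 1)).card ≤ k + 1) :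
    ∃ v : V,
      k + 1 ≤ (Finset.univ.filter (fun u => 1 ≤ G.dist v u ∧ G.dist v u ≤ k)).card ∧
      (k : ℝ) / (k + 1) * ((Fintype.card V : ℝ) - 1) ≤
        ((Finset.univ.filter (fun u => 1 ≤ G.dist v u ∧ G.dist v u ≤ k)).card : ℝ) := by
  classical
  have hc := hT.isConnected
  set n := Fintype.card V with hndef
  -- choose geodesics from r
  have hPex : ∀ u : V, ∃ p : G.Walk r u, p.length = G.dist r u :=
    fun u => hc.exists_walk_length_eq_dist r u
  choose P hPlen using hPex
  -- the child through which the geodesic to u leaves r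
  set c : V → V := fun u => (P u).getVert 1 with hcdef
  have hcu : ∀ u : V, c u = (P u).getVert 1 := fun _ => rfl
  have hadj : ∀ u : V, 1 ≤ G.dist r u → G.Adj r (c u) := by
    intro u hu
    have hlt : 0 < (P u).length := by rw [hPlen]; omega
    have := (P u).adj_getVert_succ hlt
    rwa [SimpleGraph.Walk.getVert_zero] at this
  -- vertices along the geodesic lie in the subtree of `c u`
  have hgeo : ∀ u : V, ∀ i : ℕ, 1 ≤ i → i ≤ G.dist r u →
      G.dist r ((P u).getVert i) = i ∧
      G.dist r ((P u).getVert i) = G.dist (c u) ((P u).getVert i) + 1 := by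
    intro u i hi1 hi2
    obtain ⟨h1, h2, -⟩ := geo hc (P u) (hPlen u) hi1 hi2
    rw [← hcu u] at h2
    exact ⟨h1, by omega⟩
  -- every vertex is within distance k+1 of the root
  have distbound : ∀ u : V, G.dist r u ≤ k + 1 := by
    intro u
    by_cases h0 : G.dist r u = 0
    · omega
    have hd1 : 1 ≤ G.dist r u := by omega
    have hinj : (Finset.Icc 1 (G.dist r u)).card ≤
        (Finset.univ.filter (fun w => G.dist r w = G.dist (c u) w + 1)).card := by
      apply Finset.card_le_card_of_injOn (fun i => (P u).getVert i)
      · intro i hi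
        rw [Finset.mem_coe, Finset.mem_Icc] at hi
        simp only [Finset.mem_coe, Finset.mem_filter, Finset.mem_univ, true_and]
        exact (hgeo u i hi.1 hi.2).2
      · intro i hi j hj hij
        have hij' : (P u).getVert i = (P u).getVert j := hij
        simp only [Finset.coe_Icc, Set.mem_Icc] at hi hj
        have h1 := (hgeo u i hi.1 hi.2).1
        have h2 := (hgeo u j hj.1 hj.2).1
        rw [← h1, ← h2, hij']
    rw [Nat.card_Icc] at hinj
    have := hchild (c u) (hadj u hd1)
    omega
  set A : Finset V := Finset.univ.filter (fun u => G.dist r u = k + 1) with hAdef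
  set B : Finset V := Finset.univ.filter
    (fun u : V => 1 ≤ G.dist r u ∧ G.dist r u ≤ k) with hBdef
  have hrr : G.dist r r = 0 := SimpleGraph.dist_self
  have cardAB : A.card + B.card = n - 1 := by
    have hABr : A ∪ B = Finset.univ.erase r := by
      ext u
      simp only [hAdef, hBdef, Finset.mem_union, Finset.mem_filter, Finset.mem_univ, true_and,
        Finset.mem_erase, and_true]
      constructor
      · rintro (h | h) <;> · intro he; subst he; omega
      · intro hne
        have h1 : 0 < G.dist r u := hc.pos_dist_of_ne (fun e => hne e.symm)
        have h2 := distbound u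
        omega
    have hdisj : Disjoint A B := by
      rw [Finset.disjoint_left]
      intro u hu hv
      simp only [hAdef, hBdef, Finset.mem_filter, Finset.mem_univ, true_and] at hu hv
      omega
    rw [← Finset.card_union_of_disjoint hdisj, hABr,
      Finset.card_erase_of_mem (Finset.mem_univ r), Finset.card_univ]
  set W : V → Finset V := fun u => (Finset.Icc 1 k).image (fun i => (P u).getVert i) with hWdef
  have hWcard : ∀ u ∈ A, (W u).card = k := by
    intro u hu
    simp only [hAdef, Finset.mem_filter, Finset.mem_univ, true_and] at hu
    have hinj : Set.InjOn (fun i => (P u).getVert i) (Finset.Icc 1 k) := by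
      intro i hi j hj hij
      have hij' : (P u).getVert i = (P u).getVert j := hij
      simp only [Finset.coe_Icc, Set.mem_Icc] at hi hj
      have h1 := (hgeo u i hi.1 (by omega)).1
      have h2 := (hgeo u j hj.1 (by omega)).1
      rw [← h1, ← h2, hij']
    rw [hWdef]
    rw [Finset.card_image_of_injOn hinj, Nat.card_Icc]
    omega
  have hWB : ∀ u ∈ A, W u ⊆ B := by
    intro u hu w hw
    simp only [hAdef, Finset.mem_filter, Finset.mem_univ, true_and] at hu
    simp only [hWdef, Finset.mem_image, Finset.mem_Icc] at hw
    obtain ⟨i, hi, rfl⟩ := hw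
    have h1 := (hgeo u i hi.1 (by omega)).1
    simp only [hBdef, Finset.mem_filter, Finset.mem_univ, true_and]
    omega
  have hWsub : ∀ u ∈ A, ∀ w ∈ W u, G.dist r w = G.dist (c u) w + 1 := by
    intro u hu w hw
    simp only [hAdef, Finset.mem_filter, Finset.mem_univ, true_and] at hu
    simp only [hWdef, Finset.mem_image, Finset.mem_Icc] at hw
    obtain ⟨i, hi, rfl⟩ := hw
    exact (hgeo u i hi.1 (by omega)).2
  have husub : ∀ u ∈ A, G.dist r u = G.dist (c u) u + 1 := by
    intro u hu
    simp only [hAdef, Finset.mem_filter, Finset.mem_univ, true_and] at hu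
    have hgv : (P u).getVert (G.dist r u) = u := by
      rw [← hPlen u]; exact (P u).getVert_length
    have := (hgeo u (G.dist r u) (by omega) le_rfl).2
    rwa [hgv] at this
  have hunotW : ∀ u ∈ A, u ∉ W u := by
    intro u hu hmem
    have h1 := hWB u hu hmem
    simp only [hAdef, Finset.mem_filter, Finset.mem_univ, true_and] at hu
    simp only [hBdef, Finset.mem_filter, Finset.mem_univ, true_and] at h1
    omega
  have subtree_eq : ∀ u ∈ A,
      Finset.univ.filter (fun w => G.dist r w = G.dist (c u) w + 1) = insert u (W u) := by
    intro u hu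
    have hd1 : 1 ≤ G.dist r u := by
      simp only [hAdef, Finset.mem_filter, Finset.mem_univ, true_and] at hu; omega
    have hTS : insert u (W u) ⊆
        Finset.univ.filter (fun w => G.dist r w = G.dist (c u) w + 1) := by
      intro w hw
      rw [Finset.mem_insert] at hw
      simp only [Finset.mem_filter, Finset.mem_univ, true_and]
      rcases hw with he | hw
      · rw [he]; exact husub u hu
      · exact hWsub u hu w hw
    have hTcard : (insert u (W u)).card = k + 1 := by
      rw [Finset.card_insert_of_notMem (hunotW u hu), hWcard u hu]
    have hScard := hchild (c u) (hadj u hd1)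
    exact (Finset.eq_of_subset_of_card_le hTS (by omega)).symm
  have cinj : ∀ u ∈ A, ∀ u' ∈ A, c u = c u' → u = u' := by
    intro u hu u' hu' hcc
    have h1 : u' ∈ Finset.univ.filter (fun w => G.dist r w = G.dist (c u) w + 1) := by
      simp only [Finset.mem_filter, Finset.mem_univ, true_and]
      rw [hcc]; exact husub u' hu'
    rw [subtree_eq u hu, Finset.mem_insert] at h1
    rcases h1 with h | h
    · exact h.symm
    · exfalso
      have h2 := hWB u hu h
      simp only [hBdef, Finset.mem_filter, Finset.mem_univ, true_and] at h2
      simp only [hAdef, Finset.mem_filter, Finset.mem_univ, true_and] at hu'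
      omega
  have Wdisj : ∀ u ∈ A, ∀ u' ∈ A, u ≠ u' → Disjoint (W u) (W u') := by
    intro u hu u' hu' hne
    rw [Finset.disjoint_left]
    intro w hw hw'
    have hd1 : 1 ≤ G.dist r u := by
      simp only [hAdef, Finset.mem_filter, Finset.mem_univ, true_and] at hu; omega
    have hd1' : 1 ≤ G.dist r u' := by
      simp only [hAdef, Finset.mem_filter, Finset.mem_univ, true_and] at hu'; omega
    exact hne (cinj u hu u' hu' (child_unique hT (hadj u hd1) (hadj u' hd1')
      (hWsub u hu w hw) (hWsub u' hu' w hw')))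
  have count : k * A.card ≤ B.card := by
    have hsub : A.biUnion W ⊆ B := by
      intro w hw
      rw [Finset.mem_biUnion] at hw
      obtain ⟨u, hu, hw⟩ := hw
      exact hWB u hu hw
    have hcard := Finset.card_biUnion Wdisj
    have hsum : ∑ u ∈ A, (W u).card = k * A.card := by
      rw [Finset.sum_congr rfl hWcard, Finset.sum_const, smul_eq_mul, mul_comm]
    have := Finset.card_le_card hsub
    omega
  by_cases hBge : k + 1 ≤ B.card
  · refine ⟨r, ?_, ?_⟩
    · exact hBge
    · have hkey : k * (n - 1) ≤ (k + 1) * B.card := by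
        have h1 : k * (A.card + B.card) = k * A.card + k * B.card := by ring
        have h2 : k * (A.card + B.card) ≤ B.card + k * B.card := by omega
        calc k * (n - 1) = k * (A.card + B.card) := by rw [cardAB]
          _ ≤ B.card + k * B.card := h2
          _ = (k + 1) * B.card := by ring
      have hn1 : 1 ≤ n := by omega
      have hcast : ((n : ℝ) - 1) = ((n - 1 : ℕ) : ℝ) := by
        rw [Nat.cast_sub hn1]; norm_num
      rw [div_mul_eq_mul_div, div_le_iff₀ (by positivity)]
      rw [hcast]
      calc (k : ℝ) * ((n - 1 : ℕ) : ℝ) = ((k * (n - 1) : ℕ) : ℝ) := by push_cast; ring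
        _ ≤ (((k + 1) * B.card : ℕ) : ℝ) := by exact_mod_cast hkey
        _ = (B.card : ℝ) * ((k : ℝ) + 1) := by push_cast; ring
  · -- B.card ≤ k, forces n = k + 2, A = {u}, B.card = k
    have hBle : B.card ≤ k := by omega
    have hAle : A.card ≤ 1 := by nlinarith
    have hAeq : A.card = 1 := by omega
    have hneq : n = k + 2 := by omega
    obtain ⟨u, hu⟩ := Finset.card_pos.mp (by omega : 0 < A.card)
    have hdu : G.dist r u = k + 1 := by
      simpa only [hAdef, Finset.mem_filter, Finset.mem_univ, true_and] using hu
    have hT1 : k + 1 ≤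
        (Finset.univ.filter (fun w => 1 ≤ G.dist (c u) w ∧ G.dist (c u) w ≤ k)).card := by
      -- k + 1 vertices at distance 1..k from c u
      have hsub : insert r ((Finset.Icc 2 (k + 1)).image (fun i => (P u).getVert i)) ⊆
          Finset.univ.filter (fun w => 1 ≤ G.dist (c u) w ∧ G.dist (c u) w ≤ k) := by
        intro w hw
        rw [Finset.mem_insert] at hw
        simp only [Finset.mem_filter, Finset.mem_univ, true_and]
        rcases hw with he | hw
        · rw [he]
          have : G.dist (c u) r = 1 :=
            SimpleGraph.dist_eq_one_iff_adj.mpr ((hadj u (by omega)).symm)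
          omega
        · rw [Finset.mem_image] at hw
          obtain ⟨i, hi, rfl⟩ := hw
          rw [Finset.mem_Icc] at hi
          obtain ⟨-, h2, -⟩ := geo hc (P u) (hPlen u) (i := i) (by omega) (by omega)
          rw [← hcu u] at h2
          omega
      have hcard : (insert r ((Finset.Icc 2 (k + 1)).image (fun i => (P u).getVert i))).card
          = k + 1 := by
        have himg : ((Finset.Icc 2 (k + 1)).image (fun i => (P u).getVert i)).card = k := by
          have hinj : Set.InjOn (fun i => (P u).getVert i) (Finset.Icc 2 (k + 1)) := by
            intro i hi j hj hij
            have hij' : (P u).getVert i = (P u).getVert j := hij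
            simp only [Finset.coe_Icc, Set.mem_Icc] at hi hj
            have h1 := (hgeo u i (by omega) (by omega)).1
            have h2 := (hgeo u j (by omega) (by omega)).1
            rw [← h1, ← h2, hij']
          rw [Finset.card_image_of_injOn hinj, Nat.card_Icc]
          omega
        rw [Finset.card_insert_of_notMem, himg]
        intro hmem
        rw [Finset.mem_image] at hmem
        obtain ⟨i, hi, he⟩ := hmem
        rw [Finset.mem_Icc] at hi
        have h1 := (hgeo u i (by omega) (by omega)).1
        rw [he] at h1
        omega
      calc k + 1 = (insert r ((Finset.Icc 2 (k + 1)).image (fun i => (P u).getVert i))).card :=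
            hcard.symm
        _ ≤ _ := Finset.card_le_card hsub
    refine ⟨c u, hT1, ?_⟩
    · have hcast : ((n : ℝ) - 1) = (k : ℝ) + 1 := by rw [hneq]; push_cast; ring
      rw [hcast, div_mul_cancel₀ _ (by positivity : (k : ℝ) + 1 ≠ 0)]
      have : ((k : ℕ) : ℝ) ≤ ((k + 1 : ℕ) : ℝ) := by exact_mod_cast Nat.le_succ k
      calc (k : ℝ) ≤ ((k + 1 : ℕ) : ℝ) := by exact_mod_cast Nat.le_succ k
        _ ≤ _ := by exact_mod_cast hT1
end

section
/- Let k ≥ 1 and let F be a forest with n vertices whose connected components are t rooted trees T_1, …, T_t, each having at least k + 1 vertices and each having every child subtree of its root of at most k vertices. Let (Â_p)_{p=0}^{n} be a greedy sequence for the k-hop dom on F. Then ext(Â_p) ≥ k · p for all 1 ≤ p ≤ t, and ext(Â_p) = n − p for all t ≤ p ≤ n. -/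
open Finset
open scoped Classical

lemma exists_walk_to_getVert {V : Type*} {G : SimpleGraph V} {a b : V}
    (W : G.Walk a b) (m : ℕ) : ∃ P : G.Walk a (W.getVert m), P.length ≤ m := by
  induction m with
  | zero => exact ⟨SimpleGraph.Walk.nil.copy rfl (W.getVert_zero).symm, by simp⟩
  | succ m ih =>
    obtain ⟨P, hP⟩ := ih
    by_cases h : m < W.length
    · exact ⟨P.concat (W.adj_getVert_succ h), by simpa [SimpleGraph.Walk.length_concat] using hP⟩
    · have he : W.getVert m = W.getVert (m + 1) := by
        rw [W.getVert_of_length_le (le_of_not_gt h),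
          W.getVert_of_length_le ((le_of_not_gt h).trans (Nat.le_succ m))]
      exact ⟨P.copy rfl he, by simpa using le_trans hP (Nat.le_succ m)⟩

lemma dist_getVert_le {V : Type*} {G : SimpleGraph V} {a b : V}
    (W : G.Walk a b) (m : ℕ) : G.dist a (W.getVert m) ≤ m := by
  obtain ⟨P, hP⟩ := exists_walk_to_getVert W m
  exact le_trans (SimpleGraph.dist_le P) hP

lemma reachable_getVert {V : Type*} {G : SimpleGraph V} {a b : V}
    (W : G.Walk a b) (m : ℕ) : G.Reachable a (W.getVert m) :=
  ⟨(exists_walk_to_getVert W m).choose⟩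

lemma dist_triangle_reachable {V : Type*} {G : SimpleGraph V} {a b c : V}
    (h1 : G.Reachable a b) (h2 : G.Reachable b c) :
    G.dist a c ≤ G.dist a b + G.dist b c := by
  obtain ⟨P, hP⟩ := h1.exists_walk_length_eq_dist
  obtain ⟨Q, hQ⟩ := h2.exists_walk_length_eq_dist
  rw [← hP, ← hQ, ← SimpleGraph.Walk.length_append]
  exact SimpleGraph.dist_le _

lemma root_cover {V : Type*} [Fintype V] (G : SimpleGraph V) (k : ℕ) (r : V)
    (hchild : ∀ c : V, G.Adj r c →
      (Finset.univ.filter (fun u => G.dist r u = G.dist c u + 1)).card ≤ k)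
    (u : V) (hru : G.Reachable r u) : G.dist r u ≤ k := by
  by_cases hd : G.dist r u = 0
  · simp [hd]
  obtain ⟨W, hW⟩ := hru.exists_walk_length_eq_dist
  set d := G.dist r u with hdd
  have hd1 : 1 ≤ d := Nat.one_le_iff_ne_zero.mpr hd
  have hlen : 0 < W.length := by omega
  set c := W.getVert 1 with hc
  have hadj : G.Adj r c := by
    have := W.adj_getVert_succ hlen
    rwa [W.getVert_zero] at this
  -- distance from the endpoint: suffix bound via reverse
  have hsuf : ∀ m, m ≤ d → G.dist (W.getVert m) u ≤ d - m := by
    intro m hm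
    have h1 : W.reverse.getVert (d - m) = W.getVert m := by
      rw [SimpleGraph.Walk.getVert_reverse, hW]
      congr 1
      omega
    have := dist_getVert_le W.reverse (d - m)
    rw [h1, SimpleGraph.dist_comm] at this
    exact this
  -- prefix distances are exact
  have hpre : ∀ m, m ≤ d → G.dist r (W.getVert m) = m := by
    intro m hm
    have h1 : G.dist r (W.getVert m) ≤ m := dist_getVert_le W m
    have h2 : d ≤ G.dist r (W.getVert m) + (d - m) := by
      calc d = G.dist r u := rfl
        _ ≤ G.dist r (W.getVert m) + G.dist (W.getVert m) u :=
            dist_triangle_reachable (reachable_getVert W m)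
              ((reachable_getVert W m).symm.trans hru)
        _ ≤ G.dist r (W.getVert m) + (d - m) := by
            exact Nat.add_le_add_left (hsuf m hm) _
    omega
  -- distances from c
  have hcd : ∀ m, 1 ≤ m → m ≤ d → G.dist c (W.getVert m) = m - 1 := by
    intro m h1m hm
    have hnil : ¬ W.Nil := SimpleGraph.Walk.not_nil_iff_lt_length.mpr hlen
    have h1 : G.dist c (W.getVert m) ≤ m - 1 := by
      have := dist_getVert_le W.tail (m - 1)
      rwa [SimpleGraph.Walk.getVert_tail W, Nat.sub_add_cancel h1m] at this
    have h2 : m ≤ 1 + G.dist c (W.getVert m) := by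
      calc m = G.dist r (W.getVert m) := (hpre m hm).symm
        _ ≤ G.dist r c + G.dist c (W.getVert m) :=
            dist_triangle_reachable ⟨hadj.toWalk⟩
              ((reachable_getVert W 1).symm.trans (reachable_getVert W m))
        _ ≤ 1 + G.dist c (W.getVert m) := by
            exact Nat.add_le_add_right (SimpleGraph.dist_le hadj.toWalk) _
    omega
  -- now an injection from Icc 1 d into the child-subtree set
  have hmem : ∀ m ∈ Finset.Icc 1 d, W.getVert m ∈
      Finset.univ.filter (fun u => G.dist r u = G.dist c u + 1) := by
    intro m hm
    rw [Finset.mem_Icc] at hm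
    simp only [Finset.mem_filter, Finset.mem_univ, true_and]
    rw [hpre m hm.2, hcd m hm.1 hm.2]
    omega
  have hinj : Set.InjOn (fun m => W.getVert m) (Finset.Icc 1 d) := by
    intro a ha b hb hab
    simp only [Finset.coe_Icc, Set.mem_Icc] at ha hb
    have h1 := hpre a ha.2
    have h2 := hpre b hb.2
    simp only at hab
    rw [hab, h2] at h1
    omega
  have hcard := Finset.card_le_card_of_injOn _ hmem hinj
  rw [Nat.card_Icc] at hcard
  have := hchild c hadj
  omega

/-- greedy external-domination guarantees on a forest whose `t`
components are rooted trees of at least `k+1` vertices, each child subtree of each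
root having at most `k` vertices.  (The component of `v` is the set of vertices
reachable from `v`; a vertex `u` belongs to the child subtree of a child `c` of a
root `r` iff `dist r u = dist c u + 1`.) -/
theorem greedy_ext_on_decomposed_forest_delta_zero {V : Type*} [Fintype V]
    (F : SimpleGraph V) (hF : F.IsAcyclic) (k t : ℕ) (hk : 1 ≤ k)
    (r : Fin t → V)
    (hcomp : ∀ v : V, ∃! i : Fin t, F.Reachable (r i) v)
    (hsize : ∀ i : Fin t,
      k + 1 ≤ (Finset.univ.filter (fun u => F.Reachable (r i) u)).card)
    (hchild : ∀ i : Fin t, ∀ c : V, F.Adj (r i) c →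
      (Finset.univ.filter (fun u => F.dist (r i) u = F.dist c u + 1)).card ≤ k)
    (A : ℕ → Finset V) (hA : IsGreedySeq F k (Fintype.card V) A) :
    (∀ p : ℕ, 1 ≤ p → p ≤ t → (k : ℤ) * p ≤ extk F k (A p)) ∧
    (∀ p : ℕ, t ≤ p → p ≤ Fintype.card V →
      extk F k (A p) = (Fintype.card V : ℤ) - p) := by
  classical
  obtain ⟨hA0, hstep⟩ := hA
  set n := Fintype.card V with hn
  set comp : Fin t → Finset V :=
    fun i => Finset.univ.filter (fun u => F.Reachable (r i) u) with hcompdef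
  have hmemcomp : ∀ (i : Fin t) (u : V), u ∈ comp i ↔ F.Reachable (r i) u := by
    intro i u; simp [hcompdef]
  have hJ' : ∀ v : V, ∃ i, F.Reachable (r i) v :=
    fun v => ⟨(hcomp v).choose, (hcomp v).choose_spec.1⟩
  choose J hJ using hJ'
  have hJuniq : ∀ (v : V) (i : Fin t), F.Reachable (r i) v → i = J v := by
    intro v i hi
    obtain ⟨j, _, hu⟩ := hcomp v
    rw [hu i hi, hu (J v) (hJ v)]
  have hvmem : ∀ v : V, v ∈ comp (J v) := fun v => (hmemcomp _ _).mpr (hJ v)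
  have hdisj : ∀ i j : Fin t, i ≠ j → Disjoint (comp i) (comp j) := by
    intro i j hij
    rw [Finset.disjoint_left]
    intro u hui huj
    exact hij ((hJuniq u i ((hmemcomp _ _).mp hui)).trans
      (hJuniq u j ((hmemcomp _ _).mp huj)).symm)
  have hrmem : ∀ i : Fin t, r i ∈ comp i :=
    fun i => (hmemcomp _ _).mpr (SimpleGraph.Reachable.refl _)
  have hJr : ∀ i : Fin t, J (r i) = i :=
    fun i => (hJuniq (r i) i (SimpleGraph.Reachable.refl _)).symm
  have hksub : ∀ v : V, kNbhd F k v ⊆ comp (J v) := by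
    intro v u hu
    simp only [kNbhd, Finset.mem_filter, Finset.mem_univ, true_and] at hu
    exact (hmemcomp _ _).mpr ((hJ v).trans hu.1.symm)
  have hkroot : ∀ i : Fin t, kNbhd F k (r i) = comp i := by
    intro i
    apply Finset.Subset.antisymm
    · have := hksub (r i); rwa [hJr i] at this
    · intro u hu
      have hru : F.Reachable (r i) u := (hmemcomp _ _).mp hu
      simp only [kNbhd, Finset.mem_filter, Finset.mem_univ, true_and]
      refine ⟨hru.symm, ?_⟩
      rw [SimpleGraph.dist_comm]
      exact root_cover F k (r i) (hchild i) u hru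
  have hsize' : ∀ i : Fin t, k + 1 ≤ (comp i).card := hsize
  have huniv : Finset.univ.biUnion comp = Finset.univ := by
    apply Finset.eq_univ_of_forall
    intro v
    exact Finset.mem_biUnion.mpr ⟨J v, Finset.mem_univ _, hvmem v⟩
  have hsumcard : ∀ T : Finset (Fin t),
      (T.biUnion comp).card = ∑ j ∈ T, (comp j).card :=
    fun T => Finset.card_biUnion (fun i _ j _ hij => hdisj i j hij)
  have htn : t ≤ n := by
    have h1 := hsumcard Finset.univ
    rw [huniv] at h1
    have h2 : ∑ j ∈ (Finset.univ : Finset (Fin t)), 1 ≤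
        ∑ j ∈ Finset.univ, (comp j).card :=
      Finset.sum_le_sum (fun j _ => le_trans (by omega) (hsize' j))
    simp only [Finset.sum_const, Finset.card_univ, Fintype.card_fin, smul_eq_mul,
      mul_one] at h2
    rw [← h1] at h2
    simpa [hn] using h2
  have hcardA : ∀ p : ℕ, p ≤ n → (A p).card = p := by
    intro p
    induction p with
    | zero => intro _; simp [hA0]
    | succ p ih =>
      intro hp
      obtain ⟨v, hv, hins, _⟩ := hstep p (by omega)
      rw [hins, Finset.card_insert_of_notMem hv, ih (by omega)]
  have hstep_sub : ∀ i, i < n → A i ⊆ A (i + 1) := by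
    intro i hi
    obtain ⟨v, _, hins, _⟩ := hstep i hi
    rw [hins]; exact Finset.subset_insert _ _
  have hmono : ∀ q : ℕ, q ≤ n → ∀ p : ℕ, p ≤ q → A p ⊆ A q := by
    intro q
    induction q with
    | zero => intro _ p hp; rw [Nat.le_zero.mp hp]
    | succ q ih =>
      intro hq p hp
      rcases Nat.lt_or_ge p (q + 1) with h | h
      · exact subset_trans (ih (by omega) p (by omega)) (hstep_sub q (by omega))
      · have : p = q + 1 := by omega
        rw [this]
  -- main invariant
  have hmain : ∀ p : ℕ, p ≤ t → ∃ T : Finset (Fin t), T.card = p ∧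
      (A p).biUnion (kNbhd F k) = T.biUnion comp ∧ ∀ v ∈ A p, J v ∈ T := by
    intro p
    induction p with
    | zero =>
      intro _
      exact ⟨∅, by simp, by simp [hA0], by simp [hA0]⟩
    | succ p ih =>
      intro hp
      obtain ⟨T, hTcard, hTU, hTJ⟩ := ih (by omega)
      have hpt : p < t := hp
      have hpn : p < n := lt_of_lt_of_le hpt htn
      obtain ⟨v, hv, hins, hmax⟩ := hstep p hpn
      have hrnot : ∀ j ∉ T, r j ∉ A p := by
        intro j hj hmem
        have := hTJ _ hmem
        rw [hJr j] at this
        exact hj this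
      have hdisjU : ∀ j ∉ T, Disjoint (comp j) (T.biUnion comp) := by
        intro j hj
        rw [Finset.disjoint_biUnion_right]
        intro i hi
        exact hdisj j i (fun h => hj (h ▸ hi))
      have hdomr : ∀ j ∉ T, domk F k (insert (r j) (A p)) =
          (T.biUnion comp).card + (comp j).card := by
        intro j hj
        rw [domk, Finset.biUnion_insert, hTU, hkroot j,
          Finset.card_union_of_disjoint (hdisjU j hj), Nat.add_comm]
      obtain ⟨j0, hj0⟩ : ∃ j, j ∉ T := by
        by_contra h
        push_neg at h
        have : T = Finset.univ := Finset.eq_univ_of_forall h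
        rw [this, Finset.card_univ, Fintype.card_fin] at hTcard
        omega
      have hJvT : J v ∉ T := by
        intro hJv
        have h1 : domk F k (insert v (A p)) = (T.biUnion comp).card := by
          rw [domk, Finset.biUnion_insert, hTU]
          congr 1
          apply Finset.union_eq_right.mpr
          exact subset_trans (hksub v) (Finset.subset_biUnion_of_mem comp hJv)
        have h2 := hmax (r j0) (hrnot j0 hj0)
        rw [hdomr j0 hj0, h1] at h2
        have h3 : 1 ≤ (comp j0).card := Finset.card_pos.mpr ⟨r j0, hrmem j0⟩
        omega
      have hge := hmax (r (J v)) (hrnot _ hJvT)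
      rw [hdomr _ hJvT] at hge
      have hcardT' : ((insert (J v) T).biUnion comp).card =
          (T.biUnion comp).card + (comp (J v)).card := by
        rw [Finset.biUnion_insert,
          Finset.card_union_of_disjoint (hdisjU _ hJvT), Nat.add_comm]
      have hEq : (A (p + 1)).biUnion (kNbhd F k) = (insert (J v) T).biUnion comp := by
        apply Finset.eq_of_subset_of_card_le
        · rw [hins, Finset.biUnion_insert, Finset.biUnion_insert, hTU]
          exact Finset.union_subset_union (hksub v) (Finset.Subset.refl _)
        · rw [hcardT']
          have : domk F k (insert v (A p)) = ((A (p + 1)).biUnion (kNbhd F k)).card := by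
            rw [domk, hins]
          omega
      refine ⟨insert (J v) T, ?_, hEq, ?_⟩
      · rw [Finset.card_insert_of_notMem hJvT, hTcard]
      · intro w hw
        rw [hins, Finset.mem_insert] at hw
        rcases hw with h | h
        · rw [h]; exact Finset.mem_insert_self _ _
        · exact Finset.mem_insert_of_mem (hTJ w h)
  constructor
  · intro p hp1 hpt
    obtain ⟨T, hTcard, hTU, _⟩ := hmain p hpt
    have hdom : k * p + p ≤ domk F k (A p) := by
      have h1 : ∑ j ∈ T, (k + 1) ≤ ∑ j ∈ T, (comp j).card :=
        Finset.sum_le_sum (fun j _ => hsize' j)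
      rw [Finset.sum_const, hTcard, smul_eq_mul] at h1
      rw [domk, hTU, hsumcard]
      calc k * p + p = p * (k + 1) := by ring
        _ ≤ ∑ j ∈ T, (comp j).card := h1
    rw [extk, hcardA p (hpt.trans htn)]
    have hz : (k : ℤ) * p + p ≤ (domk F k (A p) : ℤ) := by exact_mod_cast hdom
    linarith
  · have hUt : (A t).biUnion (kNbhd F k) = Finset.univ := by
      obtain ⟨T, hTcard, hTU, _⟩ := hmain t le_rfl
      have hTuniv : T = Finset.univ := by
        apply Finset.eq_univ_of_card
        rw [hTcard, Fintype.card_fin]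
      rw [hTU, hTuniv, huniv]
    intro p htp hpn
    have hsub : A t ⊆ A p := hmono p hpn t htp
    have hUp : (A p).biUnion (kNbhd F k) = Finset.univ := by
      apply Finset.eq_univ_of_forall
      intro x
      have : x ∈ (A t).biUnion (kNbhd F k) := by rw [hUt]; exact Finset.mem_univ x
      obtain ⟨a, ha, hx⟩ := Finset.mem_biUnion.mp this
      exact Finset.mem_biUnion.mpr ⟨a, hsub ha, hx⟩
    rw [extk, hcardA p hpn, domk, hUp, Finset.card_univ]
end

section
/- Let k ≥ 1 and let F be a forest with n vertices whose connected components are t rooted trees T_1, …, T_t, each having at least k + 2 vertices and each having every child subtree of its root of at most k + 1 vertices. Let (Â_p)_{p=0}^{n} be a greedy sequence for the k-hop dom on F. Then ext(Â_p) ≥ (k + 1) · p for all 1 ≤ p ≤ t, and ext(Â_p) ≥ (k/(k+1)) · (n − p) for all t ≤ p ≤ n. -/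
open Finset
open scoped Classical

namespace GreedyAux
variable {V : Type*} {F : SimpleGraph V}

lemma dist_tri {a b c : V} (h1 : F.Reachable a b) (h2 : F.Reachable b c) :
    F.dist a c ≤ F.dist a b + F.dist b c := by
  obtain ⟨w1, hw1⟩ := h1.exists_walk_length_eq_dist
  obtain ⟨w2, hw2⟩ := h2.exists_walk_length_eq_dist
  calc F.dist a c ≤ (w1.append w2).length := SimpleGraph.dist_le _
    _ = _ := by rw [SimpleGraph.Walk.length_append, hw1, hw2]

lemma walk_split {a b x : V} (w : F.Walk a b) (hw : w.length = F.dist a b)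
    (hx : x ∈ w.support) :
    F.dist a x + F.dist x b = F.dist a b := by
  have hadd : (w.takeUntil x hx).length + (w.dropUntil x hx).length = w.length := by
    conv_rhs => rw [← w.take_spec hx]
    rw [SimpleGraph.Walk.length_append]
  have h1 : F.dist a x ≤ (w.takeUntil x hx).length := SimpleGraph.dist_le _
  have h2 : F.dist x b ≤ (w.dropUntil x hx).length := SimpleGraph.dist_le _
  have h3 : F.dist a b ≤ F.dist a x + F.dist x b :=
    dist_tri ⟨w.takeUntil x hx⟩ ⟨w.dropUntil x hx⟩
  omega

lemma exists_spath {a b : V} (h : F.Reachable a b) :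
    ∃ w : F.Walk a b, w.length = F.dist a b ∧ w.IsPath := by
  obtain ⟨w, hw⟩ := h.exists_walk_length_eq_dist
  exact ⟨w.bypass, le_antisymm (hw ▸ w.length_bypass_le) (SimpleGraph.dist_le _),
    w.bypass_isPath⟩

lemma concat_isPath {a b c : V} (p : F.Walk a b) (hp : p.IsPath) (h : F.Adj b c)
    (hc : c ∉ p.support) : (p.concat h).IsPath := by
  rw [SimpleGraph.Walk.isPath_def] at *
  rw [SimpleGraph.Walk.support_concat]
  refine List.Nodup.append hp (List.nodup_singleton c) ?_
  rw [List.disjoint_singleton]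
  exact hc

lemma adj_dist_ne (hF : F.IsAcyclic) {r x y : V} (hxy : F.Adj x y)
    (hrx : F.Reachable r x) : F.dist r x ≠ F.dist r y := by
  intro heq
  have hry : F.Reachable r y := hrx.trans hxy.reachable
  obtain ⟨p1, hp1len, hp1⟩ := exists_spath hrx
  obtain ⟨p2, hp2len, hp2⟩ := exists_spath hry
  have hxny : x ∉ p2.support := by
    intro hx
    have := walk_split p2 hp2len hx
    have hdxy : F.dist x y = 1 := SimpleGraph.dist_eq_one_iff_adj.mpr hxy
    omega
  have hq : (p2.concat hxy.symm).IsPath := concat_isPath p2 hp2 hxy.symm hxny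
  have hw : p1 = p2.concat hxy.symm :=
    congrArg Subtype.val (hF.path_unique ⟨p1, hp1⟩ ⟨p2.concat hxy.symm, hq⟩)
  have hlen : p1.length = (p2.concat hxy.symm).length := by rw [hw]
  rw [SimpleGraph.Walk.length_concat] at hlen
  omega

lemma adj_dist_succ_le {r x y : V} (hxy : F.Adj x y) (hrx : F.Reachable r x) :
    F.dist r y ≤ F.dist r x + 1 := by
  obtain ⟨w, hw⟩ := hrx.exists_walk_length_eq_dist
  calc F.dist r y ≤ (w.concat hxy).length := SimpleGraph.dist_le _
    _ = _ := by rw [SimpleGraph.Walk.length_concat, hw]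

/-- `u` lies in the child subtree of `c` (w.r.t. root `r`). -/
def inS (F : SimpleGraph V) (r c u : V) : Prop := F.dist r u = F.dist c u + 1

lemma inS_reach {r c u : V} (h : inS F r c u) : F.Reachable r u :=
  SimpleGraph.Reachable.of_dist_ne_zero (by unfold inS at h; omega)

lemma inS_child_self {r c : V} (h : F.Adj r c) : inS F r c c := by
  unfold inS
  rw [SimpleGraph.dist_eq_one_iff_adj.mpr h, SimpleGraph.dist_self]

lemma inS_ne_root {r c u : V} (h : inS F r c u) : u ≠ r := by
  intro he; subst he; unfold inS at h
  rw [SimpleGraph.dist_self] at h; omega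

/-- child existence -/
lemma exists_child {r u : V} (hru : F.Reachable r u) (hne : u ≠ r) :
    ∃ c, F.Adj r c ∧ inS F r c u := by
  have hd : F.dist r u ≠ 0 := by
    intro h
    exact hne (hru.dist_eq_zero_iff.mp h).symm
  obtain ⟨w, hw⟩ := hru.exists_walk_length_eq_dist
  cases w with
  | nil => rw [← hw] at hd; simp at hd
  | @cons _ c _ h w' =>
    refine ⟨c, h, ?_⟩
    have h1 : F.dist c u ≤ w'.length := SimpleGraph.dist_le _
    have h2 : F.dist r u ≤ F.dist c u + 1 := by
      obtain ⟨w2, hw2⟩ := SimpleGraph.Reachable.exists_walk_length_eq_dist ⟨w'⟩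
      calc F.dist r u ≤ (SimpleGraph.Walk.cons h w2).length := SimpleGraph.dist_le _
        _ = _ := by rw [SimpleGraph.Walk.length_cons, hw2]
    have h3 : (SimpleGraph.Walk.cons h w').length = w'.length + 1 :=
      SimpleGraph.Walk.length_cons _ _
    unfold inS
    omega

/-- child uniqueness -/
lemma child_unique (hF : F.IsAcyclic) {r c c' u : V} (h1 : F.Adj r c) (h2 : F.Adj r c')
    (hu1 : inS F r c u) (hu2 : inS F r c' u) : c = c' := by
  by_contra hne
  have hru : F.Reachable r u := inS_reach hu1
  have hunr : u ≠ r := inS_ne_root hu1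
  unfold inS at hu1 hu2
  -- shortest path u → c, extended by edge c-r
  have huc : F.Reachable u c := (hru.symm).trans h1.reachable
  have huc' : F.Reachable u c' := (hru.symm).trans h2.reachable
  have hdc : F.dist u c = F.dist c u := SimpleGraph.dist_comm
  have hdc' : F.dist u c' = F.dist c' u := SimpleGraph.dist_comm
  obtain ⟨p1, hp1len, hp1⟩ := exists_spath huc
  obtain ⟨p2, hp2len, hp2⟩ := exists_spath huc'
  have hdur : F.dist u r = F.dist r u := SimpleGraph.dist_comm
  have hr1 : r ∉ p1.support := by
    intro hr
    have := walk_split p1 hp1len hr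
    have : F.dist r c = 1 := SimpleGraph.dist_eq_one_iff_adj.mpr h1
    have h5 : F.dist r c = F.dist r c := rfl
    have h6 := walk_split p1 hp1len hr
    rw [hdc] at h6
    have : F.dist r c = 1 := SimpleGraph.dist_eq_one_iff_adj.mpr h1
    omega
  have hr2 : r ∉ p2.support := by
    intro hr
    have h6 := walk_split p2 hp2len hr
    rw [hdc'] at h6
    have : F.dist r c' = 1 := SimpleGraph.dist_eq_one_iff_adj.mpr h2
    omega
  have hq1 : (p1.concat h1.symm).IsPath := concat_isPath p1 hp1 h1.symm hr1
  have hq2 : (p2.concat h2.symm).IsPath := concat_isPath p2 hp2 h2.symm hr2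
  have hw : p1.concat h1.symm = p2.concat h2.symm :=
    congrArg Subtype.val (hF.path_unique ⟨_, hq1⟩ ⟨_, hq2⟩)
  -- c is in the support of p1.concat, hence of p2.concat, hence in p2.support
  have hcmem : c ∈ (p1.concat h1.symm).support := by
    rw [SimpleGraph.Walk.support_concat, List.mem_append]
    exact Or.inl (SimpleGraph.Walk.end_mem_support p1)
  rw [hw, SimpleGraph.Walk.support_concat, List.mem_append] at hcmem
  rcases hcmem with hcmem | hcmem
  · have h6 := walk_split p2 hp2len hcmem
    rw [hdc'] at h6
    have hcc' : F.dist c c' = 0 := by rw [hdc] at h6; omega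
    have : F.Reachable c c' := (h1.reachable.symm).trans h2.reachable
    exact hne (this.dist_eq_zero_iff.mp hcc')
  · simp at hcmem
    exact (h1.ne (hcmem ▸ rfl)).elim

lemma step_down (hF : F.IsAcyclic) {r c x y : V} (hc : F.Adj r c) (hxy : F.Adj x y)
    (hx : inS F r c x) (hd : F.dist r y = F.dist r x + 1) : inS F r c y := by
  have hrx : F.Reachable r x := inS_reach hx
  have hcx : F.Reachable c x := (hc.reachable.symm).trans hrx
  have h1 : F.dist c y ≤ F.dist c x + 1 := adj_dist_succ_le hxy hcx
  have h2 : F.dist r y ≤ F.dist r c + F.dist c y :=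
    dist_tri hc.reachable ((hcx).trans hxy.reachable)
  have h3 : F.dist r c = 1 := SimpleGraph.dist_eq_one_iff_adj.mpr hc
  unfold inS at hx ⊢
  omega

lemma adj_inS (hF : F.IsAcyclic) {r c x y : V} (hc : F.Adj r c) (hxy : F.Adj x y)
    (hx : inS F r c x) (hy : y ≠ r) : inS F r c y := by
  have hrx : F.Reachable r x := inS_reach hx
  have hry : F.Reachable r y := hrx.trans hxy.reachable
  have hne := adj_dist_ne hF hxy hrx
  have hle1 : F.dist r y ≤ F.dist r x + 1 := adj_dist_succ_le hxy hrx
  have hle2 : F.dist r x ≤ F.dist r y + 1 := adj_dist_succ_le hxy.symm hry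
  rcases Nat.lt_or_ge (F.dist r x) (F.dist r y) with h | h
  · exact step_down hF hc hxy hx (by omega)
  · obtain ⟨c', hc', hy'⟩ := exists_child hry hy
    have hx' : inS F r c' x := step_down hF hc' hxy.symm hy' (by omega)
    have : c = c' := child_unique hF hc hc' hx hx'
    rw [this]; exact hy'

lemma walk_support_inS (hF : F.IsAcyclic) {r c : V} (hc : F.Adj r c) :
    ∀ {a b : V} (w : F.Walk a b), inS F r c a → r ∉ w.support →
      ∀ x ∈ w.support, inS F r c x := by
  intro a b w
  induction w with
  | nil =>
    intro ha _ x hx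
    rw [SimpleGraph.Walk.support_nil, List.mem_singleton] at hx
    rwa [hx]
  | @cons u v b hadj w ih =>
    intro ha hr x hx
    rw [SimpleGraph.Walk.support_cons, List.mem_cons] at hx
    rw [SimpleGraph.Walk.support_cons, List.mem_cons] at hr
    push_neg at hr
    have hvr : v ≠ r := fun h => hr.2 (h ▸ w.start_mem_support)
    have hv : inS F r c v := adj_inS hF hc hadj ha hvr
    rcases hx with hx | hx
    · rwa [hx]
    · exact ih hv hr.2 x hx

lemma same_subtree_spath (hF : F.IsAcyclic) {r c a b : V} (hc : F.Adj r c)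
    (ha : inS F r c a) (hb : inS F r c b) :
    ∃ w : F.Walk a b, w.length = F.dist a b ∧ w.IsPath ∧ r ∉ w.support ∧
      ∀ x ∈ w.support, inS F r c x := by
  have hab : F.Reachable a b := (inS_reach ha).symm.trans (inS_reach hb)
  obtain ⟨p, hplen, hp⟩ := exists_spath hab
  have hrns : r ∉ p.support := by
    intro hr
    have h1 := walk_split p hplen hr
    have h2 : F.dist a b ≤ F.dist a c + F.dist c b :=
      dist_tri ((inS_reach ha).symm.trans hc.reachable)
        ((hc.reachable.symm).trans (inS_reach hb))
    have h3 : F.dist a c = F.dist c a := SimpleGraph.dist_comm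
    have h4 : F.dist a r = F.dist r a := SimpleGraph.dist_comm
    unfold inS at ha hb
    omega
  exact ⟨p, hplen, hp, hrns, walk_support_inS hF hc p ha hrns⟩

lemma dist_cross (hF : F.IsAcyclic) {r c a b : V} (hc : F.Adj r c)
    (ha : inS F r c a) (hrb : F.Reachable r b) (hb : ¬ inS F r c b) :
    F.dist a b = F.dist r a + F.dist r b := by
  have hra : F.Reachable r a := inS_reach ha
  have hab : F.Reachable a b := hra.symm.trans hrb
  refine le_antisymm ?_ ?_
  · have h1 : F.dist a b ≤ F.dist a r + F.dist r b := dist_tri hra.symm hrb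
    have h2 : F.dist a r = F.dist r a := SimpleGraph.dist_comm
    omega
  · obtain ⟨p, hplen, hp⟩ := exists_spath hab
    have hr : r ∈ p.support := by
      by_contra hr
      exact hb (walk_support_inS hF hc p ha hr b p.end_mem_support)
    have h1 := walk_split p hplen hr
    have h2 : F.dist a r = F.dist r a := SimpleGraph.dist_comm
    omega

variable [Fintype V]

lemma mem_kNbhdX {k : ℕ} {x u : V} : u ∈ kNbhd F k x ↔ F.Reachable u x ∧ F.dist u x ≤ k := by
  simp [kNbhd]

lemma self_mem_kNbhdX {k : ℕ} {x : V} : x ∈ kNbhd F k x :=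
  mem_kNbhdX.mpr ⟨SimpleGraph.Reachable.refl x, by rw [SimpleGraph.dist_self]; omega⟩

/-- the set of vertices in the child subtree of `c` -/
noncomputable def Sfin (F : SimpleGraph V) (r c : V) : Finset V :=
  Finset.univ.filter (fun u => F.dist r u = F.dist c u + 1)

lemma mem_Sfin {r c u : V} : u ∈ Sfin F r c ↔ inS F r c u := by
  simp [Sfin, inS]

lemma same_subtree_dist_card (hF : F.IsAcyclic) {r c a b : V} (hc : F.Adj r c)
    (ha : inS F r c a) (hb : inS F r c b) :
    F.dist a b + 1 ≤ (Sfin F r c).card := by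
  obtain ⟨w, hlen, hpath, -, hsupp⟩ := same_subtree_spath hF hc ha hb
  have hsub : w.support.toFinset ⊆ Sfin F r c := by
    intro x hx
    rw [List.mem_toFinset] at hx
    exact mem_Sfin.mpr (hsupp x hx)
  have hcard : w.support.toFinset.card = w.length + 1 := by
    rw [List.toFinset_card_of_nodup hpath.support_nodup, SimpleGraph.Walk.length_support]
  calc F.dist a b + 1 = w.support.toFinset.card := by rw [hcard, hlen]
    _ ≤ _ := Finset.card_le_card hsub

lemma depth_le {k : ℕ} (hF : F.IsAcyclic) {r u : V} (hru : F.Reachable r u)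
    (hch : ∀ c, F.Adj r c → (Sfin F r c).card ≤ k + 1) : F.dist r u ≤ k + 1 := by
  by_cases hur : u = r
  · rw [hur, SimpleGraph.dist_self]; omega
  · obtain ⟨c, hc, hu⟩ := exists_child hru hur
    have h1 := same_subtree_dist_card hF hc (inS_child_self hc) hu
    have h2 := hch c hc
    unfold inS at hu
    have h3 : F.dist c u = F.dist u c := SimpleGraph.dist_comm
    omega

/-- CC0 : the part of a ball of a (weakly deeper) vertex `v` not covered by the ball of
`w` lies entirely inside `v`'s child subtree. -/
lemma ball_sdiff_subset {k : ℕ} (hF : F.IsAcyclic) {r c v w : V} (hc : F.Adj r c)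
    (hv : inS F r c v) (hrw : F.Reachable r w) (hδ : F.dist r w ≤ F.dist r v)
    (hch : ∀ c', F.Adj r c' → (Sfin F r c').card ≤ k + 1) :
    kNbhd F k v \ kNbhd F k w ⊆ Sfin F r c := by
  intro u hu
  rw [Finset.mem_sdiff, mem_kNbhdX, mem_kNbhdX] at hu
  obtain ⟨⟨huv, hduv⟩, hnw⟩ := hu
  have hru : F.Reachable r u := (inS_reach hv).trans huv.symm
  have huw : F.Reachable u w := hru.symm.trans hrw
  have hduw : k < F.dist u w := by
    by_contra h
    exact hnw ⟨huw, by omega⟩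
  rw [mem_Sfin]
  by_contra huS
  have hcross : F.dist v u = F.dist r v + F.dist r u := dist_cross hF hc hv hru huS
  have hvu : F.dist v u = F.dist u v := SimpleGraph.dist_comm
  by_cases hwr : w = r
  · subst hwr
    have : F.dist u w = F.dist w u := SimpleGraph.dist_comm
    omega
  · obtain ⟨c'', hc'', hw'⟩ := exists_child hrw hwr
    by_cases huS'' : inS F r c'' u
    · have h1 := same_subtree_dist_card hF hc'' hw' huS''
      have h2 := hch c'' hc''
      have h3 : F.dist w u = F.dist u w := SimpleGraph.dist_comm
      omega
    · have h4 : F.dist w u = F.dist r w + F.dist r u := dist_cross hF hc'' hw' hru huS''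
      have h3 : F.dist w u = F.dist u w := SimpleGraph.dist_comm
      omega

/-- Claim C: if `v` has a maximal ball in its component, any other ball in the component
adds at most `k+1` new vertices. -/
lemma ball_diff_card_le {k : ℕ} (hF : F.IsAcyclic) {r v w : V}
    (hrv : F.Reachable r v) (hrw : F.Reachable r w)
    (hch : ∀ c', F.Adj r c' → (Sfin F r c').card ≤ k + 1)
    (hmax : ∀ x, F.Reachable r x → (kNbhd F k x).card ≤ (kNbhd F k v).card) :
    (kNbhd F k w \ kNbhd F k v).card ≤ k + 1 := by
  rcases le_or_gt (F.dist r w) (F.dist r v) with h | h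
  · have hle : (kNbhd F k w \ kNbhd F k v).card ≤ (kNbhd F k v \ kNbhd F k w).card := by
      have e1 : (kNbhd F k w \ kNbhd F k v).card + (kNbhd F k w ∩ kNbhd F k v).card
          = (kNbhd F k w).card := Finset.card_sdiff_add_card_inter _ _
      have e2 : (kNbhd F k v \ kNbhd F k w).card + (kNbhd F k v ∩ kNbhd F k w).card
          = (kNbhd F k v).card := Finset.card_sdiff_add_card_inter _ _
      have e3 : kNbhd F k w ∩ kNbhd F k v = kNbhd F k v ∩ kNbhd F k w :=
        Finset.inter_comm _ _
      have e4 := hmax w hrw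
      rw [e3] at e1
      omega
    by_cases hvr : v = r
    · subst hvr
      have : v = w := hrw.dist_eq_zero_iff.mp (by
        rw [SimpleGraph.dist_self] at h; omega)
      subst this
      simp
    · obtain ⟨c, hcadj, hvS⟩ := exists_child hrv hvr
      have := Finset.card_le_card (ball_sdiff_subset hF hcadj hvS hrw h hch)
      have := hch c hcadj
      omega
  · have hwr : w ≠ r := by
      intro he; subst he; rw [SimpleGraph.dist_self] at h; omega
    obtain ⟨c, hcadj, hwS⟩ := exists_child hrw hwr
    have := Finset.card_le_card (ball_sdiff_subset hF hcadj hwS hrv (by omega) hch)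
    have := hch c hcadj
    omega

lemma ball_subset_comp {k : ℕ} {r x : V} (hrx : F.Reachable r x) :
    kNbhd F k x ⊆ Finset.univ.filter (fun u => F.Reachable r u) := by
  intro u hu
  rw [mem_kNbhdX] at hu
  rw [Finset.mem_filter]
  exact ⟨Finset.mem_univ u, hrx.trans hu.1.symm⟩

/-- F2: in each component there is a vertex whose ball has at least `k+2` vertices. -/
lemma exists_big_ball {k : ℕ} (hF : F.IsAcyclic) (hk : 1 ≤ k) {r : V}
    (hch : ∀ c, F.Adj r c → (Sfin F r c).card ≤ k + 1)
    (hsize : k + 2 ≤ (Finset.univ.filter (fun u => F.Reachable r u)).card) :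
    ∃ v, F.Reachable r v ∧ k + 2 ≤ (kNbhd F k v).card := by
  by_cases hall : ∀ u, F.Reachable r u → F.dist r u ≤ k
  · refine ⟨r, SimpleGraph.Reachable.refl r, le_trans hsize (Finset.card_le_card ?_)⟩
    intro u hu
    rw [Finset.mem_filter] at hu
    rw [mem_kNbhdX]
    refine ⟨hu.2.symm, ?_⟩
    have := hall u hu.2
    have h2 : F.dist u r = F.dist r u := SimpleGraph.dist_comm
    omega
  · push_neg at hall
    obtain ⟨u, hru, hdu⟩ := hall
    have hd : F.dist r u = k + 1 := by
      have := depth_le hF hru hch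
      omega
    have hur : u ≠ r := by
      intro he; subst he; rw [SimpleGraph.dist_self] at hd; omega
    obtain ⟨c, hcadj, hu⟩ := exists_child hru hur
    have hdc : F.dist c u = k := by unfold inS at hu; omega
    have hcu : F.Reachable c u := SimpleGraph.Reachable.of_dist_ne_zero (by omega)
    obtain ⟨p, hplen, hp⟩ := exists_spath hcu
    have hrns : r ∉ p.support := by
      intro hr
      have h1 := walk_split p hplen hr
      have h2 : F.dist c r = 1 := by
        rw [SimpleGraph.dist_comm]; exact SimpleGraph.dist_eq_one_iff_adj.mpr hcadj
      omega
    refine ⟨c, hcadj.reachable, ?_⟩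
    have hsub : insert r p.support.toFinset ⊆ kNbhd F k c := by
      intro x hx
      rw [Finset.mem_insert] at hx
      rw [mem_kNbhdX]
      rcases hx with hx | hx
      · constructor
        · rw [hx]; exact hcadj.reachable
        · rw [hx]
          have : F.dist r c = 1 := SimpleGraph.dist_eq_one_iff_adj.mpr hcadj
          omega
      · rw [List.mem_toFinset] at hx
        have h1 := walk_split p hplen hx
        have h2 : F.dist x c = F.dist c x := SimpleGraph.dist_comm
        refine ⟨⟨(p.takeUntil x hx).reverse⟩, by omega⟩
    have hcard : (insert r p.support.toFinset).card = k + 2 := by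
      rw [Finset.card_insert_of_notMem (by rwa [List.mem_toFinset])]
      rw [List.toFinset_card_of_nodup hp.support_nodup, SimpleGraph.Walk.length_support]
      omega
    calc k + 2 = (insert r p.support.toFinset).card := hcard.symm
      _ ≤ _ := Finset.card_le_card hsub

/-- F4: the ball of the root misses at most a `1/(k+1)` fraction (minus one vertex). -/
lemma root_deficiency {k : ℕ} (hF : F.IsAcyclic) (hk : 1 ≤ k) {r : V}
    (hch : ∀ c, F.Adj r c → (Sfin F r c).card ≤ k + 1) :
    (k + 1) * ((Finset.univ.filter (fun u => F.Reachable r u)) \ kNbhd F k r).card + 1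
      ≤ (Finset.univ.filter (fun u => F.Reachable r u)).card := by
  set comp := Finset.univ.filter (fun u => F.Reachable r u) with hcomp
  set L := comp \ kNbhd F k r with hL
  -- every element of L is at depth exactly k+1, and has a child ancestor
  have hLmem : ∀ u ∈ L, F.Reachable r u ∧ F.dist r u = k + 1 ∧ u ≠ r := by
    intro u hu
    rw [hL, Finset.mem_sdiff, hcomp, Finset.mem_filter, mem_kNbhdX] at hu
    obtain ⟨⟨-, hru⟩, hnb⟩ := hu
    have hd2 : F.dist u r = F.dist r u := SimpleGraph.dist_comm
    have hdep := depth_le hF hru hch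
    have hgt : ¬ F.dist u r ≤ k := fun h => hnb ⟨hru.symm, h⟩
    have hne : u ≠ r := by intro he; subst he; rw [SimpleGraph.dist_self] at hgt; omega
    exact ⟨hru, by omega, hne⟩
  -- choose the child ancestor
  have hchoice : ∀ u ∈ L, ∃ c, F.Adj r c ∧ inS F r c u := by
    intro u hu
    obtain ⟨hru, -, hne⟩ := hLmem u hu
    exact exists_child hru hne
  choose! ch hch1 hch2 using hchoice
  -- subtree of the chosen child contains a path of k+1 vertices and is contained in it
  have hkey : ∀ u ∈ L, k + 1 ≤ (Sfin F r (ch u)).card ∧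
      ∀ u' ∈ L, ch u = ch u' → u = u' := by
    intro u hu
    obtain ⟨hru, hdu, hne⟩ := hLmem u hu
    have hcS : inS F r (ch u) u := hch2 u hu
    have hdcu : F.dist (ch u) u = k := by unfold inS at hcS; omega
    obtain ⟨p, hplen, hp, hrns, hsupp⟩ :=
      same_subtree_spath hF (hch1 u hu) (inS_child_self (hch1 u hu)) hcS
    have hsub : p.support.toFinset ⊆ Sfin F r (ch u) := by
      intro x hx
      rw [List.mem_toFinset] at hx
      exact mem_Sfin.mpr (hsupp x hx)
    have hsupcard : p.support.toFinset.card = k + 1 := by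
      rw [List.toFinset_card_of_nodup hp.support_nodup, SimpleGraph.Walk.length_support]
      omega
    constructor
    · calc k + 1 = p.support.toFinset.card := hsupcard.symm
        _ ≤ _ := Finset.card_le_card hsub
    · intro u' hu' hchq
      obtain ⟨hru', hdu', hne'⟩ := hLmem u' hu'
      have hcS' : inS F r (ch u) u' := hchq ▸ hch2 u' hu'
      have hdcu' : F.dist (ch u) u' = k := by unfold inS at hcS'; omega
      -- S = support of the path, so u' lies on the path
      have hSeq : Sfin F r (ch u) = p.support.toFinset :=
        (Finset.eq_of_subset_of_card_le hsub (by rw [hsupcard]; exact hch (ch u) (hch1 u hu))).symm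
      have hu'p : u' ∈ p.support := by
        rw [← List.mem_toFinset, ← hSeq, mem_Sfin]; exact hcS'
      have h1 := walk_split p hplen hu'p
      have h0 : F.dist u' u = 0 := by omega
      have hr : F.Reachable u' u := hru'.symm.trans hru
      exact (hr.dist_eq_zero_iff.mp h0).symm
  -- counting
  have hinj : ∀ u ∈ L, ∀ u' ∈ L, u ≠ u' → Disjoint (Sfin F r (ch u)) (Sfin F r (ch u')) := by
    intro u hu u' hu' hne
    have hcne : ch u ≠ ch u' := fun h => hne ((hkey u hu).2 u' hu' h)
    rw [Finset.disjoint_left]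
    intro x hx hx'
    exact hcne (child_unique hF (hch1 u hu) (hch1 u' hu') (mem_Sfin.mp hx) (mem_Sfin.mp hx'))
  have hbu : (L.biUnion (fun u => Sfin F r (ch u))).card = ∑ u ∈ L, (Sfin F r (ch u)).card :=
    Finset.card_biUnion hinj
  have hlb : (k + 1) * L.card ≤ (L.biUnion (fun u => Sfin F r (ch u))).card := by
    rw [hbu]
    calc (k+1) * L.card = ∑ _u ∈ L, (k+1) := by rw [Finset.sum_const, smul_eq_mul, mul_comm]
      _ ≤ _ := Finset.sum_le_sum (fun u hu => (hkey u hu).1)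
  have hsubc : insert r (L.biUnion (fun u => Sfin F r (ch u))) ⊆ comp := by
    intro x hx
    rw [Finset.mem_insert] at hx
    rw [hcomp, Finset.mem_filter]
    rcases hx with hx | hx
    · exact ⟨Finset.mem_univ _, by rw [hx]⟩
    · rw [Finset.mem_biUnion] at hx
      obtain ⟨u, hu, hxS⟩ := hx
      exact ⟨Finset.mem_univ _, inS_reach (mem_Sfin.mp hxS)⟩
  have hrnb : r ∉ L.biUnion (fun u => Sfin F r (ch u)) := by
    rw [Finset.mem_biUnion]
    rintro ⟨u, hu, hrS⟩
    exact inS_ne_root (mem_Sfin.mp hrS) rfl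
  have : (insert r (L.biUnion (fun u => Sfin F r (ch u)))).card =
      (L.biUnion (fun u => Sfin F r (ch u))).card + 1 := Finset.card_insert_of_notMem hrnb
  have := Finset.card_le_card hsubc
  omega

end GreedyAux


set_option maxHeartbeats 1600000 in
/-- greedy external-domination guarantees on a forest whose `t`
components are rooted trees of at least `k+2` vertices, each child subtree of each
root having at most `k+1` vertices.  (The component of `v` is the set of vertices
reachable from `v`; a vertex `u` belongs to the child subtree of a child `c` of a
root `r` iff `dist r u = dist c u + 1`.) -/
theorem greedy_ext_on_decomposed_forest_delta_one {V : Type*} [Fintype V]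
    (F : SimpleGraph V) (hF : F.IsAcyclic) (k t : ℕ) (hk : 1 ≤ k)
    (r : Fin t → V)
    (hcomp : ∀ v : V, ∃! i : Fin t, F.Reachable (r i) v)
    (hsize : ∀ i : Fin t,
      k + 2 ≤ (Finset.univ.filter (fun u => F.Reachable (r i) u)).card)
    (hchild : ∀ i : Fin t, ∀ c : V, F.Adj (r i) c →
      (Finset.univ.filter (fun u => F.dist (r i) u = F.dist c u + 1)).card ≤ k + 1)
    (A : ℕ → Finset V) (hA : IsGreedySeq F k (Fintype.card V) A) :
    (∀ p : ℕ, 1 ≤ p → p ≤ t → ((k : ℤ) + 1) * p ≤ extk F k (A p)) ∧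
    (∀ p : ℕ, t ≤ p → p ≤ Fintype.card V →
      (k : ℝ) / (k + 1) * ((Fintype.card V : ℝ) - p) ≤ (extk F k (A p) : ℝ)) := by
  classical
  obtain ⟨hA0, hstep⟩ := hA
  set N := Fintype.card V with hN
  -- the component index of a vertex
  have hidxE : ∀ x : V, ∃ i : Fin t, F.Reachable (r i) x := fun x => ⟨(hcomp x).choose, (hcomp x).choose_spec.1⟩
  choose idx hidx1 using hidxE
  have huniq : ∀ {i j : Fin t} {x : V},
      F.Reachable (r i) x → F.Reachable (r j) x → i = j := by
    intro i j x h1 h2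
    have e1 := (hcomp x).choose_spec.2 i h1
    have e2 := (hcomp x).choose_spec.2 j h2
    rw [e1, e2]
  -- components
  set comp : Fin t → Finset V := fun i => Finset.univ.filter (fun u => F.Reachable (r i) u)
    with hcompdef
  have hmemcomp : ∀ i x, x ∈ comp i ↔ F.Reachable (r i) x := by
    intro i x; rw [hcompdef]; simp
  have hch' : ∀ i : Fin t, ∀ c : V, F.Adj (r i) c →
      (GreedyAux.Sfin F (r i) c).card ≤ k + 1 := by
    intro i c hc
    simpa [GreedyAux.Sfin] using hchild i c hc
  have hsize' : ∀ i, k + 2 ≤ (comp i).card := fun i => by rw [hcompdef]; exact hsize i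
  -- fiberwise counting
  have hfiber : ∀ s : Finset V, ∑ i : Fin t, (comp i ∩ s).card = s.card := by
    intro s
    have H : ∀ x ∈ s, idx x ∈ (Finset.univ : Finset (Fin t)) := fun x _ => Finset.mem_univ _
    rw [Finset.card_eq_sum_card_fiberwise H]
    refine Finset.sum_congr rfl ?_
    intro i _
    congr 1
    ext x
    rw [Finset.mem_filter, Finset.mem_inter, hmemcomp]
    constructor
    · rintro ⟨hrx, hxs⟩
      exact ⟨hxs, huniq (hidx1 x) hrx⟩
    · rintro ⟨hxs, hix⟩
      exact ⟨hix ▸ hidx1 x, hxs⟩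
  have hsumcomp : ∑ i : Fin t, ((comp i).card : ℤ) = (N : ℤ) := by
    have h1 := hfiber Finset.univ
    simp only [Finset.inter_univ] at h1
    rw [← Nat.cast_sum, h1, hN]
    simp
  -- dominated set
  set D : ℕ → Finset V := fun p => (A p).biUnion (kNbhd F k) with hD
  have hdom : ∀ p, domk F k (A p) = (D p).card := fun _ => rfl
  have hAD : ∀ p, A p ⊆ D p := by
    intro p a ha
    rw [hD]
    exact Finset.mem_biUnion.mpr ⟨a, ha, GreedyAux.self_mem_kNbhdX⟩
  have hgainf : ∀ (p : ℕ) (x : V),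
      domk F k (insert x (A p)) = (kNbhd F k x \ D p).card + domk F k (A p) := by
    intro p x
    unfold domk
    rw [hD]
    rw [Finset.biUnion_insert, ← Finset.card_sdiff_add_card]
  -- balls lie in components
  have hBC : ∀ (i : Fin t) (x : V), F.Reachable (r i) x → kNbhd F k x ⊆ comp i := by
    intro i x hx
    rw [hcompdef]
    exact GreedyAux.ball_subset_comp hx
  -- touched components
  set Tch : ℕ → Finset (Fin t) :=
    fun p => Finset.univ.filter (fun i => ∃ x ∈ A p, F.Reachable (r i) x) with hTchdef
  have hTch : ∀ p i, i ∈ Tch p ↔ ∃ x ∈ A p, F.Reachable (r i) x := by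
    intro p i; rw [hTchdef]; simp
  have hTch0 : Tch 0 = ∅ := by
    ext i; rw [hTch]; simp [hA0]
  -- untouched components are disjoint from the dominated set
  have huntD : ∀ p i, i ∉ Tch p → ∀ u ∈ D p, ¬ F.Reachable (r i) u := by
    intro p i hi u hu hru
    rw [hD] at hu
    obtain ⟨a, haA, hab⟩ := Finset.mem_biUnion.mp hu
    have hua : F.Reachable u a := (GreedyAux.mem_kNbhdX.mp hab).1
    exact hi ((hTch p i).mpr ⟨a, haA, hru.trans hua⟩)
  have huntB : ∀ p i, i ∉ Tch p → ∀ y, F.Reachable (r i) y →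
      kNbhd F k y \ D p = kNbhd F k y := by
    intro p i hi y hy
    apply Finset.sdiff_eq_self_of_disjoint
    rw [Finset.disjoint_left]
    intro x hx hxD
    have hxc : x ∈ comp i := hBC i y hy hx
    exact huntD p i hi x hxD ((hmemcomp i x).mp hxc)
  have huntA : ∀ p i, i ∉ Tch p → ∀ y, F.Reachable (r i) y → y ∉ A p := by
    intro p i hi y hy hyA
    exact hi ((hTch p i).mpr ⟨y, hyA, hy⟩)
  -- basic: A is increasing with cardinality p
  have hAcard : ∀ p, p ≤ N → (A p).card = p := by
    intro p
    induction p with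
    | zero => intro _; rw [hA0]; simp
    | succ p ih =>
      intro hp
      obtain ⟨v, hvA, hA1, -⟩ := hstep p (by omega)
      rw [hA1, Finset.card_insert_of_notMem hvA, ih (by omega)]
  have hAmono : ∀ p q, p ≤ q → q ≤ N → A p ⊆ A q := by
    intro p q hpq hq
    induction q with
    | zero =>
      have hp0 : p = 0 := by omega
      rw [hp0]
    | succ q ih =>
      rcases Nat.lt_or_ge p (q+1) with h | h
      · obtain ⟨v, hvA, hA1, -⟩ := hstep q (by omega)
        refine subset_trans (ih (by omega) (by omega)) ?_
        rw [hA1]; exact Finset.subset_insert _ _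
      · have hpq1 : p = q + 1 := by omega
        rw [hpq1]
  -- touched set after one greedy step
  have hTchstep : ∀ p v, A (p+1) = insert v (A p) →
      ∀ i, i ∈ Tch (p+1) ↔ i ∈ Tch p ∨ i = idx v := by
    intro p v hA1 i
    constructor
    · intro hi
      obtain ⟨x, hx, hrx⟩ := (hTch _ i).mp hi
      rw [hA1, Finset.mem_insert] at hx
      rcases hx with hx | hx
      · exact Or.inr (huniq (hx ▸ hrx) (hidx1 v))
      · exact Or.inl ((hTch p i).mpr ⟨x, hx, hrx⟩)
    · intro hi
      rcases hi with hi | hi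
      · obtain ⟨x, hx, hrx⟩ := (hTch p i).mp hi
        refine (hTch _ i).mpr ⟨x, ?_, hrx⟩
        rw [hA1]; exact Finset.mem_insert_of_mem hx
      · refine (hTch _ i).mpr ⟨v, ?_, hi ▸ hidx1 v⟩
        rw [hA1]; exact Finset.mem_insert_self _ _
  have hTchmono : ∀ p q, p ≤ q → q ≤ N → Tch p ⊆ Tch q := by
    intro p q hpq hq i hi
    obtain ⟨x, hx, hrx⟩ := (hTch p i).mp hi
    exact (hTch q i).mpr ⟨x, hAmono p q hpq hq hx, hrx⟩
  have htN : t ≤ N := by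
    have hrinj : Function.Injective r := by
      intro i j hij
      exact huniq (SimpleGraph.Reachable.refl (r i)) (hij ▸ SimpleGraph.Reachable.refl (r i))
    have h1 := Fintype.card_le_of_injective r hrinj
    simpa [hN] using h1
  ----------------------------------------------------------------
  -- M1 : the first t greedy steps
  ----------------------------------------------------------------
  have hM1 : ∀ p, p ≤ t → (Tch p).card = p ∧
      (∀ i ∈ Tch p, ∃ a ∈ A p, F.Reachable (r i) a ∧
        ∀ x, F.Reachable (r i) x → (kNbhd F k x).card ≤ (kNbhd F k a).card) ∧
      (k+2) * p ≤ domk F k (A p) := by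
    intro p
    induction p with
    | zero =>
      intro _
      refine ⟨by rw [hTch0]; simp, by rw [hTch0]; simp, by simp⟩
    | succ p ih =>
      intro hp1
      obtain ⟨hc, hinv, hdomp⟩ := ih (by omega)
      have hpN : p < N := by omega
      obtain ⟨v, hvA, hA1, hmax⟩ := hstep p hpN
      -- an untouched component exists
      have hTne : Tch p ≠ Finset.univ := by
        intro h
        rw [h, Finset.card_univ, Fintype.card_fin] at hc
        omega
      obtain ⟨j0, hj0⟩ : ∃ j0, j0 ∉ Tch p := by
        by_contra h
        push_neg at h
        exact hTne (Finset.eq_univ_iff_forall.mpr h)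
      obtain ⟨x0, hx0r, hx0b⟩ := GreedyAux.exists_big_ball hF hk (hch' j0) (hsize j0)
      have hx0A : x0 ∉ A p := huntA p j0 hj0 x0 hx0r
      have hgainx0 : (kNbhd F k x0 \ D p).card = (kNbhd F k x0).card := by
        rw [huntB p j0 hj0 x0 hx0r]
      have hge : k + 2 ≤ (kNbhd F k v \ D p).card := by
        have h1 := hmax x0 hx0A
        rw [hgainf p x0, hgainf p v, hgainx0] at h1
        omega
      -- the greedy vertex v lies in an untouched component
      have hjrv : F.Reachable (r (idx v)) v := hidx1 v
      have hjun : idx v ∉ Tch p := by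
        intro hjt
        obtain ⟨a, haA, har, hamax⟩ := hinv (idx v) hjt
        have hBa : kNbhd F k a ⊆ D p := by
          rw [hD]; exact Finset.subset_biUnion_of_mem (kNbhd F k) haA
        have h1 : (kNbhd F k v \ D p).card ≤ (kNbhd F k v \ kNbhd F k a).card :=
          Finset.card_le_card (Finset.sdiff_subset_sdiff (subset_refl _) hBa)
        have h2 := GreedyAux.ball_diff_card_le hF har hjrv (hch' (idx v)) hamax
        omega
      -- conclusions
      have hTch1 : Tch (p+1) = insert (idx v) (Tch p) := by
        ext i
        rw [hTchstep p v hA1 i, Finset.mem_insert]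
        tauto
      have hcard1 : (Tch (p+1)).card = p + 1 := by
        rw [hTch1, Finset.card_insert_of_notMem hjun, hc]
      refine ⟨hcard1, ?_, ?_⟩
      · intro i hi
        rw [hTch1, Finset.mem_insert] at hi
        by_cases hij : i = idx v
        · subst hij
          refine ⟨v, by rw [hA1]; exact Finset.mem_insert_self _ _, hjrv, ?_⟩
          intro x hx
          have hxA : x ∉ A p := huntA p _ hjun x hx
          have h1 := hmax x hxA
          rw [hgainf p x, hgainf p v, huntB p _ hjun x hx] at h1
          have h2 : (kNbhd F k v \ D p).card ≤ (kNbhd F k v).card :=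
            Finset.card_le_card Finset.sdiff_subset
          omega
        · have hi' : i ∈ Tch p := by tauto
          obtain ⟨a, haA, har, hamax⟩ := hinv i hi'
          exact ⟨a, by rw [hA1]; exact Finset.mem_insert_of_mem haA, har, hamax⟩
      · have hde : domk F k (A (p+1)) = (kNbhd F k v \ D p).card + domk F k (A p) := by
          rw [hA1]; exact hgainf p v
        rw [hde]
        have hmul : (k+2) * (p+1) = (k+2) * p + (k+2) := by ring
        omega
  ----------------------------------------------------------------
  -- M2 : the potential function is bounded by N
  ----------------------------------------------------------------
  set term : Fin t → ℕ → ℤ := fun i p =>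
    if i ∈ Tch p then ((k:ℤ)+1) * ((comp i \ D p).card : ℤ)
    else ((k:ℤ)+1) * (((comp i \ kNbhd F k (r i)).card : ℤ)) + 1 with hterm
  set Pot : ℕ → ℤ := fun p => (p : ℤ) + ∑ i : Fin t, term i p with hPot
  have hM2 : ∀ p, p ≤ N → Pot p ≤ (N : ℤ) := by
    intro p
    induction p with
    | zero =>
      intro _
      have hterm0 : ∀ i : Fin t, term i 0 ≤ ((comp i).card : ℤ) := by
        intro i
        have hub := GreedyAux.root_deficiency (k := k) hF hk (hch' i)
        have hnotin : i ∉ Tch 0 := by rw [hTch0]; exact Finset.notMem_empty i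
        have hval : term i 0 = ((k:ℤ)+1) * (((comp i \ kNbhd F k (r i)).card : ℤ)) + 1 := by
          rw [hterm]; simp only [if_neg hnotin]
        rw [hval]
        rw [hcompdef]
        push_cast
        push_cast at hub
        linarith
      have hPot0 : Pot 0 = ∑ i : Fin t, term i 0 := by rw [hPot]; simp
      rw [hPot0]
      calc ∑ i : Fin t, term i 0 ≤ ∑ i : Fin t, ((comp i).card : ℤ) :=
            Finset.sum_le_sum (fun i _ => hterm0 i)
        _ = (N : ℤ) := hsumcomp
    | succ p ih =>
      intro hp1
      have hpN : p < N := by omega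
      have ihp := ih (by omega)
      obtain ⟨v, hvA, hA1, hmax⟩ := hstep p hpN
      have hjrv : F.Reachable (r (idx v)) v := hidx1 v
      have hBv : kNbhd F k v ⊆ comp (idx v) := hBC (idx v) v hjrv
      have hDp1 : D (p+1) = kNbhd F k v ∪ D p := by
        rw [hD]
        simp only [hA1, Finset.biUnion_insert]
      have hjT1 : idx v ∈ Tch (p+1) := (hTchstep p v hA1 (idx v)).mpr (Or.inr rfl)
      -- unchanged components
      have hcompD : ∀ i, i ≠ idx v → comp i \ D (p+1) = comp i \ D p := by
        intro i hij
        rw [hDp1, Finset.sdiff_union_distrib]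
        have hci : comp i \ kNbhd F k v = comp i := by
          apply Finset.sdiff_eq_self_of_disjoint
          rw [Finset.disjoint_left]
          intro x hx hxB
          have hxj : x ∈ comp (idx v) := hBv hxB
          exact hij (huniq ((hmemcomp i x).mp hx) ((hmemcomp _ x).mp hxj))
        rw [hci]
        exact Finset.inter_eq_right.mpr Finset.sdiff_subset
      have hterm_ne : ∀ i, i ≠ idx v → term i (p+1) = term i p := by
        intro i hij
        have hmemT : (i ∈ Tch (p+1)) ↔ (i ∈ Tch p) := by
          rw [hTchstep p v hA1 i]
          constructor
          · rintro (h | h)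
            · exact h
            · exact absurd h hij
          · exact Or.inl
        rw [hterm]
        simp only [hcompD i hij]
        by_cases hmem : i ∈ Tch p
        · rw [if_pos (hmemT.mpr hmem), if_pos hmem]
        · rw [if_neg (fun h => hmem (hmemT.mp h)), if_neg hmem]
      have hPotSplit : Pot (p+1) = Pot p + 1 + (term (idx v) (p+1) - term (idx v) p) := by
        rw [hPot]
        have hsplit : ∑ i : Fin t, term i (p+1) - ∑ i : Fin t, term i p
            = term (idx v) (p+1) - term (idx v) p := by
          rw [← Finset.sum_sub_distrib]
          apply Finset.sum_eq_single
          · intro i _ hij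
            rw [hterm_ne i hij]; ring
          · intro h; exact absurd (Finset.mem_univ (idx v)) h
        push_cast
        linarith
      by_cases hU : D p = Finset.univ
      · -- everything was already dominated
        have hDall : D (p+1) = Finset.univ := by
          apply Finset.univ_subset_iff.mp
          rw [hDp1, ← hU]
          exact Finset.subset_union_right
        have hTall : ∀ i, i ∈ Tch (p+1) := by
          intro i
          have hri : r i ∈ D p := hU ▸ Finset.mem_univ (r i)
          rw [hD] at hri
          obtain ⟨a, haA, hab⟩ := Finset.mem_biUnion.mp hri
          refine (hTch _ i).mpr ⟨a, ?_, (GreedyAux.mem_kNbhdX.mp hab).1⟩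
          rw [hA1]; exact Finset.mem_insert_of_mem haA
        have hval : ∀ i : Fin t, term i (p+1) = 0 := by
          intro i
          have hempty : comp i \ D (p+1) = ∅ := by
            rw [hDall]
            simp
          rw [hterm]
          simp only [if_pos (hTall i), hempty]
          simp
        have hPval : Pot (p+1) = ((p:ℤ) + 1) := by
          rw [hPot]
          simp only [hval, Finset.sum_const_zero]
          push_cast
          ring
        rw [hPval]
        have : (p:ℤ) + 1 ≤ (N:ℤ) := by exact_mod_cast hp1
        exact this
      · -- there is an undominated vertex, so the greedy gain is ≥ 1
        have hne : (Finset.univ \ D p).Nonempty := by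
          rw [Finset.sdiff_nonempty]
          intro h
          exact hU (Finset.univ_subset_iff.mp h)
        obtain ⟨u0, hu0⟩ := hne
        rw [Finset.mem_sdiff] at hu0
        have hu0A : u0 ∉ A p := fun h => hu0.2 (hAD p h)
        have hge1 : 1 ≤ (kNbhd F k v \ D p).card := by
          have h1 := hmax u0 hu0A
          rw [hgainf p u0, hgainf p v] at h1
          have h2 : u0 ∈ kNbhd F k u0 \ D p :=
            Finset.mem_sdiff.mpr ⟨GreedyAux.self_mem_kNbhdX, hu0.2⟩
          have h3 : 1 ≤ (kNbhd F k u0 \ D p).card := Finset.card_pos.mpr ⟨u0, h2⟩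
          omega
        -- the gain happens inside comp (idx v)
        have hsubgain : kNbhd F k v \ D p ⊆ comp (idx v) \ D p :=
          Finset.sdiff_subset_sdiff hBv (subset_refl _)
        have hsplitj : comp (idx v) \ D (p+1) = (comp (idx v) \ D p) \ (kNbhd F k v \ D p) := by
          rw [hDp1]; ext x
          simp only [Finset.mem_sdiff, Finset.mem_union]
          tauto
        have hcardj : (comp (idx v) \ D (p+1)).card
            = (comp (idx v) \ D p).card - (kNbhd F k v \ D p).card := by
          rw [hsplitj, Finset.card_sdiff_of_subset hsubgain]
        have hlecard : (kNbhd F k v \ D p).card ≤ (comp (idx v) \ D p).card :=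
          Finset.card_le_card hsubgain
        by_cases hjT : idx v ∈ Tch p
        · have htj : term (idx v) (p+1) - term (idx v) p
              = -(((k:ℤ)+1) * ((kNbhd F k v \ D p).card : ℤ)) := by
            rw [hterm]
            simp only [if_pos hjT, if_pos hjT1]
            rw [hcardj]
            rw [Nat.cast_sub hlecard]
            ring
          have hdec : Pot (p+1) ≤ Pot p := by
            rw [hPotSplit, htj]
            have hg : (1:ℤ) ≤ ((kNbhd F k v \ D p).card : ℤ) := by exact_mod_cast hge1
            have hk1 : (1:ℤ) ≤ (k:ℤ) + 1 := by
              have := Int.natCast_nonneg k; linarith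
            nlinarith
          exact le_trans hdec ihp
        · -- first pick in this component: gain at least the root ball
          have hrjA : r (idx v) ∉ A p :=
            huntA p _ hjT (r (idx v)) (SimpleGraph.Reachable.refl _)
          have hBrj : kNbhd F k (r (idx v)) \ D p = kNbhd F k (r (idx v)) :=
            huntB p _ hjT (r (idx v)) (SimpleGraph.Reachable.refl _)
          have hgeb : (kNbhd F k (r (idx v))).card ≤ (kNbhd F k v \ D p).card := by
            have h1 := hmax (r (idx v)) hrjA
            rw [hgainf p (r (idx v)), hgainf p v, hBrj] at h1
            omega
          have hcompj : comp (idx v) \ D p = comp (idx v) := by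
            apply Finset.sdiff_eq_self_of_disjoint
            rw [Finset.disjoint_left]
            intro x hx hxD
            exact huntD p _ hjT x hxD ((hmemcomp _ x).mp hx)
          have hBrsub : kNbhd F k (r (idx v)) ⊆ comp (idx v) :=
            hBC _ _ (SimpleGraph.Reachable.refl _)
          have hcardr : (comp (idx v) \ kNbhd F k (r (idx v))).card
              = (comp (idx v)).card - (kNbhd F k (r (idx v))).card :=
            Finset.card_sdiff_of_subset hBrsub
          have hcardrle : (kNbhd F k (r (idx v))).card ≤ (comp (idx v)).card :=
            Finset.card_le_card hBrsub
          have hgainle : (kNbhd F k v \ D p).card ≤ (comp (idx v)).card := by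
            rw [← hcompj]; exact hlecard
          have htj : term (idx v) (p+1) - term (idx v) p ≤ -1 := by
            rw [hterm]
            simp only [if_pos hjT1, if_neg hjT]
            rw [hcardj, hcompj]
            rw [Nat.cast_sub (by rw [← hcompj]; exact hlecard)]
            rw [hcardr, Nat.cast_sub hcardrle]
            have h1 : ((kNbhd F k (r (idx v))).card : ℤ) ≤ ((kNbhd F k v \ D p).card : ℤ) := by
              exact_mod_cast hgeb
            have hk1 : (0:ℤ) ≤ (k:ℤ) + 1 := by
              have := Int.natCast_nonneg k; linarith
            nlinarith
          have hdec : Pot (p+1) ≤ Pot p := by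
            rw [hPotSplit]
            linarith
          exact le_trans hdec ihp
  ----------------------------------------------------------------
  -- conclusions
  ----------------------------------------------------------------
  constructor
  · -- part 1
    intro p hp1 hpt
    have hdomge := (hM1 p hpt).2.2
    have hcardA : (A p).card = p := hAcard p (le_trans hpt htN)
    unfold extk
    rw [hcardA]
    have hd : ((k:ℤ)+2) * (p:ℤ) ≤ (domk F k (A p) : ℤ) := by exact_mod_cast hdomge
    linarith
  · -- part 2
    intro p hpt hpN
    have hTall : Tch p = Finset.univ := by
      apply Finset.eq_univ_of_card
      have h1 : (Tch t).card = t := (hM1 t le_rfl).1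
      have h2 : Tch t ⊆ Tch p := hTchmono t p hpt hpN
      have h3 := Finset.card_le_card h2
      have h4 : (Tch p).card ≤ t := by
        have := Finset.card_le_univ (Tch p)
        simpa using this
      rw [Fintype.card_fin]
      omega
    have hPotp : Pot p = (p:ℤ) + ((k:ℤ)+1) * ((Finset.univ \ D p).card : ℤ) := by
      rw [hPot]
      have hval : ∀ i : Fin t, term i p = ((k:ℤ)+1) * ((comp i \ D p).card : ℤ) := by
        intro i
        rw [hterm]
        simp only [if_pos (hTall ▸ Finset.mem_univ i)]
      simp only [hval]
      rw [← Finset.mul_sum]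
      congr 2
      have h5 : ∀ i : Fin t, comp i \ D p = comp i ∩ (Finset.univ \ D p) := by
        intro i; ext x
        simp only [Finset.mem_sdiff, Finset.mem_inter, Finset.mem_univ, true_and]
      have h6 := hfiber (Finset.univ \ D p)
      rw [← h6, ← Nat.cast_sum]
      congr 1
      exact Finset.sum_congr rfl (fun i _ => by rw [h5 i])
    have hM2p := hM2 p hpN
    rw [hPotp] at hM2p
    have hDcard : ((Finset.univ \ D p).card : ℤ) = (N : ℤ) - (domk F k (A p) : ℤ) := by
      have hle : (D p).card ≤ N := by rw [hN]; simpa using Finset.card_le_univ (D p)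
      rw [hdom p, Finset.card_sdiff_of_subset (Finset.subset_univ _), Finset.card_univ, ← hN,
        Nat.cast_sub hle]
    rw [hDcard] at hM2p
    -- now hM2p : p + (k+1) * (N - dom) ≤ N
    have hcardA : (A p).card = p := hAcard p hpN
    unfold extk
    rw [hcardA]
    have hdomle : (domk F k (A p) : ℤ) ≤ (N : ℤ) := by
      rw [hdom p]
      have := Finset.card_le_univ (D p)
      have h7 : ((D p).card : ℤ) ≤ ((Finset.univ : Finset V).card : ℤ) := by exact_mod_cast this
      simpa [hN] using h7
    -- goal in ℝ
    have hkey : (k:ℤ) * ((N:ℤ) - (p:ℤ)) ≤ ((k:ℤ)+1) * ((domk F k (A p) : ℤ) - (p:ℤ)) := by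
      nlinarith
    have hkeyR : (k:ℝ) * ((N:ℝ) - (p:ℝ)) ≤ ((k:ℝ)+1) * ((domk F k (A p) : ℝ) - (p:ℝ)) := by
      exact_mod_cast hkey
    have hkpos : (0:ℝ) < (k:ℝ) + 1 := by positivity
    rw [div_mul_eq_mul_div, div_le_iff₀ hkpos]
    push_cast
    nlinarith
end

section
/- Let k ≥ 1, l ≥ 2 be integers and let T be a tree in the family S_{k,l} (so T has k + 2l + 1 vertices). Then there exists a set D of vertices of T with |D| = ⌊(l+1)/2⌋ such that ext(D) ≥ k + l; moreover, k + l ≥ 2⌊(l+1)/2⌋ and k + l ≥ (3/5) · (k + 2l + 1 − ⌊(l+1)/2⌋). -/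
open Finset
open scoped Classical

/-- The connected component of `c` in `F` is a tree of the family `S_{a,b}` with
center `c`: every vertex of the component is within distance 2 of `c`, `c` has
`a + b` neighbors, exactly `b` vertices are at distance 2 from `c`, and every
neighbor of `c` has at most one neighbor other than `c` (in an acyclic graph this
pins the structure of `S_{a,b}`: `a` pendant leaves and `b` legs of length two). -/
def IsSFamilyComponent {V : Type*} [Fintype V] (F : SimpleGraph V) (c : V)
    (a b : ℕ) : Prop :=
  (∀ u : V, F.Reachable c u → F.dist c u ≤ 2) ∧
  (Finset.univ.filter (fun u => F.Adj c u)).card = a + b ∧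
  (Finset.univ.filter (fun u => F.dist c u = 2)).card = b ∧
  ∀ w : V, F.Adj c w → (Finset.univ.filter (fun u => F.Adj w u ∧ u ≠ c)).card ≤ 1

/-- in a tree `T ∈ S_{k,l}` with `k ≥ 1`, `l ≥ 2` (so `T` has
`k + 2l + 1` vertices) there is a set `D` of `⌊(l+1)/2⌋` dominators externally
dominating at least `k + l` vertices; moreover `k + l ≥ 2⌊(l+1)/2⌋` and
`k + l ≥ (3/5)(k + 2l + 1 - ⌊(l+1)/2⌋)`. -/
theorem ext_dominators_in_S_family_tree {V : Type*} [Fintype V]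
    (T : SimpleGraph V) (hT : T.IsTree) (c : V) (k l : ℕ) (hk : 1 ≤ k) (hl : 2 ≤ l)
    (hS : IsSFamilyComponent T c k l)
    (hcard : Fintype.card V = k + 2 * l + 1) :
    (∃ D : Finset V, D.card = (l + 1) / 2 ∧ ((k : ℤ) + l) ≤ extk T 1 D) ∧
    2 * ((l + 1) / 2) ≤ k + l ∧
    (3 : ℝ) / 5 * ((k : ℝ) + 2 * l + 1 - (((l + 1) / 2 : ℕ) : ℝ)) ≤ (k : ℝ) + l := by
  obtain ⟨hdist2, hcardN, hcardW2, hleg⟩ := hS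
  have hconn : T.Connected := hT.isConnected
  -- description of the closed neighborhood of c
  have hNc : ∀ u : V, u ∈ kNbhd T 1 c ↔ u = c ∨ T.Adj c u := by
    intro u
    simp only [kNbhd, mem_filter, mem_univ, true_and]
    constructor
    · rintro ⟨hr, hd⟩
      interval_cases h : T.dist u c
      · exact Or.inl (hr.dist_eq_zero_iff.mp h)
      · exact Or.inr (SimpleGraph.dist_eq_one_iff_adj.mp h).symm
    · rintro (rfl | hadj)
      · exact ⟨SimpleGraph.Reachable.refl _, by rw [SimpleGraph.dist_self]; omega⟩
      · exact ⟨hadj.symm.reachable, le_of_eq (SimpleGraph.dist_eq_one_iff_adj.mpr hadj.symm)⟩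
  -- the set of vertices at distance 2 from c
  set W2 : Finset V := Finset.univ.filter (fun u => T.dist c u = 2) with hW2
  -- for each x at distance 2, a midpoint adjacent to both c and x
  have hmid : ∀ x ∈ W2, ∃ w, T.Adj c w ∧ T.Adj w x := by
    intro x hx
    simp only [hW2, mem_filter, mem_univ, true_and] at hx
    obtain ⟨p, hp⟩ := (hconn c x).exists_walk_length_eq_dist
    rw [hx] at hp
    cases p with
    | nil => simp at hp
    | cons h q =>
      cases q with
      | nil => simp at hp
      | cons h' q' =>
        cases q' with
        | nil => exact ⟨_, h, h'⟩
        | cons h'' q'' => simp [SimpleGraph.Walk.length_cons] at hp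
  choose f hf1 hf2 using hmid
  -- choose a subset of W2 of the right size
  have hm : (l + 1) / 2 - 1 ≤ W2.card := by rw [hcardW2]; omega
  obtain ⟨S, hSsub, hScard⟩ := Finset.exists_subset_card_eq hm
  -- the dominating set
  classical
  set g : V → V := fun x => if h : x ∈ W2 then f x h else x with hg
  have hgadj : ∀ x ∈ S, T.Adj c (g x) ∧ T.Adj (g x) x := by
    intro x hx
    have hx2 := hSsub hx
    simp only [hg, dif_pos hx2]
    exact ⟨hf1 x hx2, hf2 x hx2⟩
  have hginj : Set.InjOn g S := by
    intro x hx y hy hxy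
    have hxW := hSsub hx
    have hyW := hSsub hy
    have hxc : x ≠ c := by
      simp only [hW2, mem_filter, mem_univ, true_and] at hxW
      intro h; rw [h, SimpleGraph.dist_self] at hxW; omega
    have hyc : y ≠ c := by
      simp only [hW2, mem_filter, mem_univ, true_and] at hyW
      intro h; rw [h, SimpleGraph.dist_self] at hyW; omega
    have h1 := (hgadj x hx).1
    have hx' : x ∈ Finset.univ.filter (fun u => T.Adj (g x) u ∧ u ≠ c) := by
      simp [(hgadj x hx).2, hxc]
    have hy' : y ∈ Finset.univ.filter (fun u => T.Adj (g x) u ∧ u ≠ c) := by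
      simp [hxy ▸ (hgadj y hy).2, hyc]
    have := hleg (g x) h1
    have := Finset.card_le_one.mp this x hx' y hy'
    exact this
  set D : Finset V := insert c (S.image g) with hD
  have hcnotin : c ∉ S.image g := by
    intro h
    obtain ⟨x, hx, hgx⟩ := Finset.mem_image.mp h
    exact T.irrefl (hgx ▸ (hgadj x hx).1)
  have hDcard : D.card = (l + 1) / 2 := by
    rw [hD, Finset.card_insert_of_notMem hcnotin, Finset.card_image_of_injOn hginj, hScard]
    omega
  -- dom lower bound: kNbhd c ∪ S ⊆ biUnion
  have hsub : kNbhd T 1 c ∪ S ⊆ D.biUnion (kNbhd T 1) := by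
    intro u hu
    rcases Finset.mem_union.mp hu with hu | hu
    · exact Finset.mem_biUnion.mpr ⟨c, Finset.mem_insert_self _ _, hu⟩
    · refine Finset.mem_biUnion.mpr ⟨g u, Finset.mem_insert_of_mem (Finset.mem_image_of_mem g hu), ?_⟩
      simp only [kNbhd, mem_filter, mem_univ, true_and]
      exact ⟨(hgadj u hu).2.reachable.symm,
        le_of_eq (SimpleGraph.dist_eq_one_iff_adj.mpr (hgadj u hu).2.symm)⟩
  have hdisj : Disjoint (kNbhd T 1 c) S := by
    rw [Finset.disjoint_left]
    intro u hu huS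
    have huW := hSsub huS
    simp only [hW2, mem_filter, mem_univ, true_and] at huW
    rcases (hNc u).mp hu with rfl | hadj
    · rw [SimpleGraph.dist_self] at huW; omega
    · have := SimpleGraph.dist_eq_one_iff_adj.mpr hadj
      omega
  have hNccard : (kNbhd T 1 c).card = k + l + 1 := by
    have : kNbhd T 1 c = insert c (Finset.univ.filter (fun u => T.Adj c u)) := by
      ext u
      simp only [hNc, Finset.mem_insert, mem_filter, mem_univ, true_and]
    rw [this, Finset.card_insert_of_notMem (by simp), hcardN]
  have hdomD : k + l + 1 + ((l + 1) / 2 - 1) ≤ domk T 1 D := by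
    calc k + l + 1 + ((l + 1) / 2 - 1) = (kNbhd T 1 c ∪ S).card := by
          rw [Finset.card_union_of_disjoint hdisj, hNccard, hScard]
      _ ≤ _ := Finset.card_le_card hsub
  refine ⟨⟨D, hDcard, ?_⟩, by omega, ?_⟩
  · unfold extk
    rw [hDcard]
    have : ((l + 1) / 2 : ℕ) ≥ 1 := by omega
    have h1 : (k + l + 1 + ((l + 1) / 2 - 1) : ℤ) ≤ (domk T 1 D : ℤ) := by
      exact_mod_cast Nat.cast_le.mpr hdomD
    push_cast [Nat.cast_sub this] at h1 ⊢
    linarith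
  · have harith : l + 3 ≤ 2 * k + 3 * ((l + 1) / 2) := by omega
    have : ((l : ℝ) + 3) ≤ 2 * k + 3 * (((l + 1) / 2 : ℕ) : ℝ) := by exact_mod_cast harith
    linarith
end

section
/- Consider an election instance in which every candidate is a voter (Z ⊆ X), every candidate approves of itself (c ∈ S_c for all c ∈ Z), and every candidate approves of at least one candidate other than itself (for every c ∈ Z there exists c' ∈ Z with c' ≠ c and c ∈ S_{c'}). Let 1 ≤ p ≤ |Z| and let (C_i)_{i=0}^{p} be a greedy sequence for rep. Then ext(C_p) ≥ ((e − 1)/(e + 1)) · ext(C') for every committee C' ⊆ Z with |C'| = p. -/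
open Finset

/-- if every candidate is a voter, approves of itself, and is approved
by at least one other candidate, then the greedy sequence for `rep` achieves an
`(e-1)/(e+1)`-approximation for the number of externally represented voters
`ext(C) = rep(C) - |C|`, where `rep(C) = |⋃_{c ∈ C} S c|`. -/
theorem greedy_max_ext_representation {α : Type*} [DecidableEq α]
    (X Z : Finset α) (S : α → Finset α)
    (hZX : Z ⊆ X) (hSX : ∀ c ∈ Z, S c ⊆ X)
    (hself : ∀ c ∈ Z, c ∈ S c)
    (hother : ∀ c ∈ Z, ∃ c' ∈ Z, c' ≠ c ∧ c ∈ S c')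
    (p : ℕ) (hp1 : 1 ≤ p) (hpZ : p ≤ Z.card)
    (C : ℕ → Finset α) (hC0 : C 0 = ∅)
    (hgreedy : ∀ i < p, ∃ c ∈ Z \ C i, C (i + 1) = insert c (C i) ∧
      ∀ c' ∈ Z \ C i,
        ((insert c' (C i)).biUnion S).card ≤ ((insert c (C i)).biUnion S).card) :
    ∀ C' ⊆ Z, C'.card = p →
      (Real.exp 1 - 1) / (Real.exp 1 + 1) *
          (((C'.biUnion S).card : ℝ) - (C'.card : ℝ)) ≤
        (((C p).biUnion S).card : ℝ) - ((C p).card : ℝ) := by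
  intro C' hC'Z hC'p
  classical
  set a : ℕ → ℕ := fun i => ((C i).biUnion S).card with ha
  set Rn : ℕ := (C'.biUnion S).card with hRnd
  -- basic structure of the greedy sequence
  have hsub : ∀ i ≤ p, C i ⊆ Z ∧ (C i).card = i := by
    intro i hi
    induction i with
    | zero => simp [hC0]
    | succ n ih =>
      obtain ⟨hz, hcard⟩ := ih (by omega)
      obtain ⟨c, hc, heq, -⟩ := hgreedy n (by omega)
      obtain ⟨hcZ, hcC⟩ := mem_sdiff.mp hc
      rw [heq]
      exact ⟨insert_subset hcZ hz, by rw [card_insert_of_notMem hcC, hcard]⟩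
  have hstep : ∀ i < p, C i ⊆ C (i + 1) := by
    intro i hi
    obtain ⟨c, -, heq, -⟩ := hgreedy i hi
    rw [heq]; exact subset_insert _ _
  have hmono : ∀ j ≤ p, ∀ i ≤ j, C i ⊆ C j := by
    intro j
    induction j with
    | zero => intro _ i hi; rw [Nat.le_zero.mp hi]
    | succ n ih =>
      intro hj i hi
      rcases Nat.eq_or_lt_of_le hi with h | h
      · rw [h]
      · exact (ih (by omega) i (by omega)).trans (hstep n (by omega))
  have hamono : ∀ j ≤ p, ∀ i ≤ j, a i ≤ a j := by
    intro j hj i hi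
    exact card_le_card (biUnion_subset_biUnion_of_subset_left _ (hmono j hj i hi))
  have ha0 : a 0 = 0 := by simp [ha, hC0]
  have hins : ∀ (c : α) (D : Finset α),
      ((insert c D).biUnion S).card = (D.biUnion S).card + (S c \ D.biUnion S).card := by
    intro c D
    rw [biUnion_insert, ← card_sdiff_add_card]
    omega
  have hgopt : ∀ i < p, ∀ c' ∈ Z \ C i,
      a i + (S c' \ (C i).biUnion S).card ≤ a (i + 1) := by
    intro i hi c' hc'
    obtain ⟨c, hc, heq, hmax⟩ := hgreedy i hi
    calc a i + (S c' \ (C i).biUnion S).card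
        = ((insert c' (C i)).biUnion S).card := (hins c' (C i)).symm
      _ ≤ ((insert c (C i)).biUnion S).card := hmax c' hc'
      _ = a (i + 1) := by simp only [ha]; rw [heq]
  -- key submodularity inequality
  have hkey : ∀ i < p, Rn ≤ a i + p * (a (i + 1) - a i) := by
    intro i hi
    have h1 : Rn ≤ ((C i ∪ C').biUnion S).card := by
      exact card_le_card (biUnion_subset_biUnion_of_subset_left _ subset_union_right)
    have h2 : (C i ∪ C').biUnion S ⊆
        (C i).biUnion S ∪ (C' \ C i).biUnion (fun c => S c \ (C i).biUnion S) := by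
      intro x hx
      rw [mem_biUnion] at hx
      obtain ⟨c, hc, hxc⟩ := hx
      by_cases hxT : x ∈ (C i).biUnion S
      · exact mem_union_left _ hxT
      · rcases mem_union.mp hc with h | h
        · exact absurd (mem_biUnion.mpr ⟨c, h, hxc⟩) hxT
        · by_cases hcC : c ∈ C i
          · exact absurd (mem_biUnion.mpr ⟨c, hcC, hxc⟩) hxT
          · exact mem_union_right _ (mem_biUnion.mpr
              ⟨c, mem_sdiff.mpr ⟨h, hcC⟩, mem_sdiff.mpr ⟨hxc, hxT⟩⟩)
    have h3 : ((C i ∪ C').biUnion S).card ≤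
        a i + ∑ c ∈ C' \ C i, (S c \ (C i).biUnion S).card := by
      calc ((C i ∪ C').biUnion S).card
          ≤ ((C i).biUnion S ∪ (C' \ C i).biUnion (fun c => S c \ (C i).biUnion S)).card :=
            card_le_card h2
        _ ≤ ((C i).biUnion S).card +
            ((C' \ C i).biUnion (fun c => S c \ (C i).biUnion S)).card := card_union_le _ _
        _ ≤ a i + ∑ c ∈ C' \ C i, (S c \ (C i).biUnion S).card :=
            Nat.add_le_add_left (card_biUnion_le) _
    have h4 : ∀ c ∈ C' \ C i, (S c \ (C i).biUnion S).card ≤ a (i + 1) - a i := by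
      intro c hc
      have hcz : c ∈ Z \ C i :=
        mem_sdiff.mpr ⟨hC'Z (mem_sdiff.mp hc).1, (mem_sdiff.mp hc).2⟩
      have := hgopt i hi c hcz
      omega
    have h5 : ∑ c ∈ C' \ C i, (S c \ (C i).biUnion S).card ≤ p * (a (i + 1) - a i) := by
      calc ∑ c ∈ C' \ C i, (S c \ (C i).biUnion S).card
          ≤ ∑ _c ∈ C' \ C i, (a (i + 1) - a i) := Finset.sum_le_sum h4
        _ = (C' \ C i).card * (a (i + 1) - a i) := by rw [sum_const, smul_eq_mul]
        _ ≤ p * (a (i + 1) - a i) := by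
            have hcc : (C' \ C i).card ≤ p := hC'p ▸ card_le_card sdiff_subset
            exact Nat.mul_le_mul_right _ hcc
    omega
  -- the goal in convenient form
  rw [hC'p, (hsub p le_rfl).2]
  have hapr : ((((C p).biUnion S).card : ℕ) : ℝ) = ((a p : ℕ) : ℝ) := rfl
  rw [hapr]
  set E : ℝ := Real.exp 1 with hE
  have hE2 : (2:ℝ) < E := by
    have := Real.exp_one_gt_d9; rw [hE]; linarith
  have hE3 : E < 3 := by
    have := Real.exp_one_lt_d9; rw [hE]; linarith
  rw [div_mul_eq_mul_div, div_le_iff₀ (by linarith : (0:ℝ) < E + 1)]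
  rcases le_or_gt Rn p with hRp | hRp
  · -- trivial case: opt covers at most p voters
    have hselfp : (p:ℝ) ≤ (a p : ℝ) := by
      have hsubset : C p ⊆ (C p).biUnion S := by
        intro x hx
        exact mem_biUnion.mpr ⟨x, hx, hself x ((hsub p le_rfl).1 hx)⟩
      have := card_le_card hsubset
      rw [(hsub p le_rfl).2] at this
      exact_mod_cast this
    have h1 : (Rn:ℝ) ≤ p := by exact_mod_cast hRp
    nlinarith [mul_nonneg (by linarith : (0:ℝ) ≤ E - 1) (by linarith : (0:ℝ) ≤ (p:ℝ) - Rn)]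
  · by_cases hA : ∃ i, i < p ∧ a (i + 1) = a i
    · -- some greedy step gains nothing: greedy already reached the optimum
      obtain ⟨i, hi, hgi⟩ := hA
      have h0 : a (i + 1) - a i = 0 := by omega
      have h1 : Rn ≤ a i := by
        have := hkey i hi; rw [h0, Nat.mul_zero] at this; omega
      have h2 : a i ≤ a p := hamono p le_rfl i (le_of_lt hi)
      have hr1 : (Rn:ℝ) ≤ (a p : ℝ) := by exact_mod_cast h1.trans h2
      have hr2 : (p:ℝ) < (Rn:ℝ) := by exact_mod_cast hRp
      nlinarith [mul_le_mul_of_nonneg_left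
          (show (Rn:ℝ) - p ≤ (a p : ℝ) - p by linarith)
          (show (0:ℝ) ≤ E - 1 by linarith),
        mul_nonneg (show (0:ℝ) ≤ (a p : ℝ) - p by linarith) (show (0:ℝ) ≤ (2:ℝ) by norm_num)]
    · push_neg at hA
      have hall1 : ∀ i < p, a i + 1 ≤ a (i + 1) := by
        intro i hi
        have h1 := hA i hi
        have h2 := hamono (i + 1) (by omega) i (by omega)
        omega
      have hchain : ∀ j ≤ p, ∀ i ≤ j, a i + (j - i) ≤ a j := by
        intro j
        induction j with
        | zero =>
          intro _ i hi
          have h0 : i = 0 := Nat.le_zero.mp hi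
          subst h0; omega
        | succ n ih =>
          intro hj i hi
          rcases Nat.eq_or_lt_of_le hi with h | h
          · subst h; omega
          · have h1 := ih (by omega) i (by omega)
            have h2 := hall1 n (by omega)
            omega
      have hp_ap : p ≤ a p := by
        have := hchain p le_rfl 0 (by omega)
        omega
      by_cases hB : ∃ j, j < p ∧ a (j + 1) ≤ a j + 1
      · -- a step of gain exactly 1 exists; take the first one
        obtain ⟨j, ⟨hjlt, hj2⟩, hmin⟩ :
            ∃ j, (j < p ∧ a (j + 1) ≤ a j + 1) ∧
              ∀ i < j, ¬(i < p ∧ a (i + 1) ≤ a i + 1) :=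
          ⟨Nat.find hB, Nat.find_spec hB, fun i hi => Nat.find_min hB hi⟩
        have hpre : ∀ i < j, a i + 2 ≤ a (i + 1) := by
          intro i hij
          have h1 := hmin i hij
          have h2 : i < p := by omega
          omega
        have h2j : ∀ k ≤ j, 2 * k ≤ a k := by
          intro k hk
          induction k with
          | zero => omega
          | succ n ih =>
            have h1 := hpre n (by omega)
            have h2 := ih (by omega)
            omega
        have hRaj : Rn ≤ a j + p := by
          have h1 := hkey j hjlt
          have h2 : a (j + 1) - a j ≤ 1 := by omega
          have h3 : p * (a (j + 1) - a j) ≤ p * 1 := Nat.mul_le_mul_left p h2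
          omega
        have hjp : a j + (p - j) ≤ a p := hchain p le_rfl j (le_of_lt hjlt)
        -- cast everything to ℝ
        have r1 : (Rn:ℝ) ≤ (a j : ℝ) + p := by exact_mod_cast hRaj
        have r2 : 2 * (j:ℝ) ≤ (a j : ℝ) := by exact_mod_cast h2j j le_rfl
        have r3 : (a j : ℝ) + ((p:ℝ) - j) ≤ (a p : ℝ) := by
          have : ((a j + (p - j) : ℕ) : ℝ) ≤ ((a p : ℕ) : ℝ) := by exact_mod_cast hjp
          rw [Nat.cast_add, Nat.cast_sub (le_of_lt hjlt)] at this
          linarith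
      -- ext ≥ (Rn - p)/2
        nlinarith [mul_nonneg (show (0:ℝ) ≤ E - 1 by linarith)
            (show (0:ℝ) ≤ 2 * ((a p : ℝ) - p) - ((Rn:ℝ) - p) by linarith),
          mul_nonneg (show (0:ℝ) ≤ 3 - E by linarith)
            (show (0:ℝ) ≤ (a p : ℝ) - p by linarith)]
      · -- every greedy step gains at least 2
        push_neg at hB
        have h2g : ∀ i < p, a i + 2 ≤ a (i + 1) := by
          intro i hi
          have := hB i
          omega
        have h2p : ∀ k ≤ p, 2 * k ≤ a k := by
          intro k hk
          induction k with
          | zero => omega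
          | succ n ih =>
            have h1 := h2g n (by omega)
            have h2 := ih (by omega)
            omega
        have hp0' : (0:ℝ) < (p:ℝ) := by exact_mod_cast hp1
        have hq : (0:ℝ) ≤ 1 - 1 / (p:ℝ) := by
          rw [sub_nonneg, div_le_one hp0']
          exact_mod_cast hp1
        -- classic greedy iteration
        have hiter : ∀ i ≤ p, (Rn:ℝ) - (a i : ℝ) ≤ (1 - 1 / (p:ℝ)) ^ i * Rn := by
          intro i hi
          induction i with
          | zero => rw [ha0]; norm_num
          | succ n ih =>
            have hnp : n < p := by omega
            have IH := ih (by omega)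
            have hmn : a n ≤ a (n + 1) := hamono (n + 1) (by omega) n (by omega)
            have hkr : (Rn:ℝ) ≤ (a n : ℝ) + (p:ℝ) * ((a (n + 1) : ℝ) - (a n : ℝ)) := by
              have h2 : ((Rn:ℕ):ℝ) ≤ ((a n + p * (a (n + 1) - a n) : ℕ) : ℝ) := by
                exact_mod_cast hkey n hnp
              rw [Nat.cast_add, Nat.cast_mul, Nat.cast_sub hmn] at h2
              exact h2
            have hstep2 : (p:ℝ) * ((Rn:ℝ) - (a (n + 1) : ℝ)) ≤
                ((p:ℝ) - 1) * ((Rn:ℝ) - (a n : ℝ)) := by nlinarith [hkr]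
            have h5 : (Rn:ℝ) - (a (n + 1) : ℝ) ≤
                (1 - 1 / (p:ℝ)) * ((Rn:ℝ) - (a n : ℝ)) := by
              rw [← mul_le_mul_iff_right₀ hp0']
              calc (p:ℝ) * ((Rn:ℝ) - (a (n + 1) : ℝ))
                  ≤ ((p:ℝ) - 1) * ((Rn:ℝ) - (a n : ℝ)) := hstep2
                _ = (p:ℝ) * ((1 - 1 / (p:ℝ)) * ((Rn:ℝ) - (a n : ℝ))) := by
                    field_simp
            calc (Rn:ℝ) - (a (n + 1) : ℝ)
                ≤ (1 - 1 / (p:ℝ)) * ((Rn:ℝ) - (a n : ℝ)) := h5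
              _ ≤ (1 - 1 / (p:ℝ)) * ((1 - 1 / (p:ℝ)) ^ n * Rn) :=
                  mul_le_mul_of_nonneg_left IH hq
              _ = (1 - 1 / (p:ℝ)) ^ (n + 1) * Rn := by ring
        have hqe : (1 - 1 / (p:ℝ)) ^ p ≤ Real.exp (-1) := by
          have h1 : 1 - 1 / (p:ℝ) ≤ Real.exp (-(1 / (p:ℝ))) := by
            have := Real.add_one_le_exp (-(1 / (p:ℝ)))
            linarith
          calc (1 - 1 / (p:ℝ)) ^ p ≤ (Real.exp (-(1 / (p:ℝ)))) ^ p :=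
              pow_le_pow_left₀ hq h1 p
            _ = Real.exp ((p:ℕ) * -(1 / (p:ℝ))) := (Real.exp_nat_mul _ p).symm
            _ = Real.exp (-1) := by
                have hpne : (p:ℝ) ≠ 0 := ne_of_gt hp0'
                have : ((p:ℕ):ℝ) * -(1 / (p:ℝ)) = -1 := by field_simp
                rw [this]
        have hRnn : (0:ℝ) ≤ (Rn:ℝ) := Nat.cast_nonneg _
        have hfin : (Rn:ℝ) - (a p : ℝ) ≤ Real.exp (-1) * Rn :=
          (hiter p le_rfl).trans (mul_le_mul_of_nonneg_right hqe hRnn)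
        have hEpos : (0:ℝ) < E := Real.exp_pos 1
        have hEfin : E * ((Rn:ℝ) - (a p : ℝ)) ≤ (Rn:ℝ) := by
          have h1 := mul_le_mul_of_nonneg_left hfin hEpos.le
          have h2 : E * (Real.exp (-1) * (Rn:ℝ)) = (Rn:ℝ) := by
            rw [Real.exp_neg, ← hE, ← mul_assoc, mul_inv_cancel₀ (ne_of_gt hEpos), one_mul]
          linarith
        have r2p : 2 * (p:ℝ) ≤ (a p : ℝ) := by exact_mod_cast h2p p le_rfl
        nlinarith [hEfin, r2p]
end
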